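/- arXiv:1903.06545 — 9 statements merged into one kernel-verified Lean document; each statement's English description precedes it below -/
import Mathlib

section
/- For nonnegative reals x1,...,x5 and y1,...,y5, with A = (x1^{10} + x2^8 + x3^6 + x4^4 + x5^2)^{1/10} and B defined analogously from the yi, one has 252 x1^5 y1^5 + 70 x2^4 y2^4 + 20 x3^3 y3^3 + 6 x4^2 y4^2 + 2 x5 y5 ≤ 252 A^5 B^5. -/
theorem stmt_3 (x1 x2 x3 x4 x5 y1 y2 y3 y4 y5 : ℝ)
    (hx1 : 0 ≤ x1) (hx2 : 0 ≤ x2) (hx3 : 0 ≤ x3) (hx4 : 0 ≤ x4) (hx5 : 0 ≤ x5)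
    (hy1 : 0 ≤ y1) (hy2 : 0 ≤ y2) (hy3 : 0 ≤ y3) (hy4 : 0 ≤ y4) (hy5 : 0 ≤ y5) :
    252 * x1 ^ (5:ℕ) * y1 ^ (5:ℕ) + 70 * x2 ^ (4:ℕ) * y2 ^ (4:ℕ) +
    20 * x3 ^ (3:ℕ) * y3 ^ (3:ℕ) + 6 * x4 ^ (2:ℕ) * y4 ^ (2:ℕ) + 2 * x5 * y5 ≤
    252 * ((x1 ^ (10:ℕ) + x2 ^ (8:ℕ) + x3 ^ (6:ℕ) + x4 ^ (4:ℕ) + x5 ^ (2:ℕ)) ^ ((1:ℝ)/10)) ^ (5:ℕ) *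
    ((y1 ^ (10:ℕ) + y2 ^ (8:ℕ) + y3 ^ (6:ℕ) + y4 ^ (4:ℕ) + y5 ^ (2:ℕ)) ^ ((1:ℝ)/10)) ^ (5:ℕ) := by
  set Sx : ℝ := x1 ^ (10:ℕ) + x2 ^ (8:ℕ) + x3 ^ (6:ℕ) + x4 ^ (4:ℕ) + x5 ^ (2:ℕ) with hSx
  set Sy : ℝ := y1 ^ (10:ℕ) + y2 ^ (8:ℕ) + y3 ^ (6:ℕ) + y4 ^ (4:ℕ) + y5 ^ (2:ℕ) with hSy
  have hSx0 : 0 ≤ Sx := by positivity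
  have hSy0 : 0 ≤ Sy := by positivity
  have hx : (Sx ^ ((1:ℝ)/10)) ^ (5:ℕ) = Real.sqrt Sx := by
    rw [← Real.rpow_natCast (Sx ^ ((1:ℝ)/10)) 5, ← Real.rpow_mul hSx0,
      Real.sqrt_eq_rpow]
    norm_num
  have hy : (Sy ^ ((1:ℝ)/10)) ^ (5:ℕ) = Real.sqrt Sy := by
    rw [← Real.rpow_natCast (Sy ^ ((1:ℝ)/10)) 5, ← Real.rpow_mul hSy0,
      Real.sqrt_eq_rpow]
    norm_num
  rw [hx, hy]
  have key : x1^(5:ℕ)*y1^(5:ℕ) + x2^(4:ℕ)*y2^(4:ℕ) + x3^(3:ℕ)*y3^(3:ℕ)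
      + x4^(2:ℕ)*y4^(2:ℕ) + x5*y5 ≤ Real.sqrt Sx * Real.sqrt Sy := by
    rw [← Real.sqrt_mul hSx0]
    apply Real.le_sqrt_of_sq_le
    rw [hSx, hSy]
    nlinarith [sq_nonneg (x1^5*y2^4 - x2^4*y1^5), sq_nonneg (x1^5*y3^3 - x3^3*y1^5),
      sq_nonneg (x1^5*y4^2 - x4^2*y1^5), sq_nonneg (x1^5*y5 - x5*y1^5),
      sq_nonneg (x2^4*y3^3 - x3^3*y2^4), sq_nonneg (x2^4*y4^2 - x4^2*y2^4),
      sq_nonneg (x2^4*y5 - x5*y2^4), sq_nonneg (x3^3*y4^2 - x4^2*y3^3),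
      sq_nonneg (x3^3*y5 - x5*y3^3), sq_nonneg (x4^2*y5 - x5*y4^2)]
  nlinarith [mul_nonneg hx1 hy1, mul_nonneg hx2 hy2, mul_nonneg hx3 hy3,
    mul_nonneg hx4 hy4, mul_nonneg hx5 hy5, pow_nonneg (mul_nonneg hx1 hy1) 5,
    pow_nonneg (mul_nonneg hx2 hy2) 4, pow_nonneg (mul_nonneg hx3 hy3) 3,
    pow_nonneg (mul_nonneg hx4 hy4) 2, key]
end

section
/- For nonnegative reals x1, x2, x3, y1, y2, y3, with A = (x1^{10} + x2^8 + x3^6)^{1/10} and B = (y1^{10} + y2^8 + y3^6)^{1/10}, one has 120 x1^7 y1^3 + 120 x1^3 y1^7 + 56 x2^5 y2^3 + 56 x2^3 y2^5 + 15 x3^4 y3^2 + 15 x3^2 y3^4 ≤ 120 A^7 B^3 + 120 A^3 B^7. -/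
private lemma rpow_frac_pow (u : ℝ) (hu : 0 ≤ u) (p n : ℕ) (hn : (n:ℝ) ≠ 0) :
    (u ^ ((p:ℝ)/(n:ℝ))) ^ n = u ^ p := by
  rw [← Real.rpow_natCast (u ^ ((p:ℝ)/(n:ℝ))) n, ← Real.rpow_mul hu,
    div_mul_cancel₀ _ hn, Real.rpow_natCast]

private lemma amgm2 (n p q : ℕ) (hn : n ≠ 0) (hpq : p + q = n)
    (u v c : ℝ) (hu : 0 ≤ u) (hv : 0 ≤ v) (hc : 0 ≤ c)
    (h : c ^ n = u ^ p * v ^ q) :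
    c ≤ (p:ℝ)/n * u + (q:ℝ)/n * v := by
  have hn0 : (0:ℝ) < n := by exact_mod_cast Nat.pos_of_ne_zero hn
  have hn' : (n:ℝ) ≠ 0 := ne_of_gt hn0
  have hsum : (p:ℝ)/n + (q:ℝ)/n = 1 := by
    have : ((p:ℝ) + q) = n := by exact_mod_cast congrArg (Nat.cast : ℕ → ℝ) hpq
    field_simp
    linarith
  have key := Real.geom_mean_le_arith_mean2_weighted
    (by positivity : (0:ℝ) ≤ (p:ℝ)/n) (by positivity : (0:ℝ) ≤ (q:ℝ)/n) hu hv hsum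
  have hd : (u ^ ((p:ℝ)/n) * v ^ ((q:ℝ)/n)) ^ n = c ^ n := by
    rw [mul_pow, rpow_frac_pow u hu p n hn', rpow_frac_pow v hv q n hn', h]
  have hce : c = u ^ ((p:ℝ)/n) * v ^ ((q:ℝ)/n) :=
    ((pow_left_inj₀ (by positivity) hc hn).mp hd).symm
  linarith [hce ▸ key]

private lemma amgm3 (n p q r : ℕ) (hn : n ≠ 0) (hpqr : p + q + r = n)
    (u v w c : ℝ) (hu : 0 ≤ u) (hv : 0 ≤ v) (hw : 0 ≤ w) (hc : 0 ≤ c)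
    (h : c ^ n = u ^ p * v ^ q * w ^ r) :
    c ≤ (p:ℝ)/n * u + (q:ℝ)/n * v + (r:ℝ)/n * w := by
  have hn0 : (0:ℝ) < n := by exact_mod_cast Nat.pos_of_ne_zero hn
  have hn' : (n:ℝ) ≠ 0 := ne_of_gt hn0
  have hsum : (p:ℝ)/n + (q:ℝ)/n + (r:ℝ)/n = 1 := by
    have : ((p:ℝ) + q + r) = n := by exact_mod_cast congrArg (Nat.cast : ℕ → ℝ) hpqr
    field_simp
    linarith
  have key := Real.geom_mean_le_arith_mean3_weighted
    (by positivity : (0:ℝ) ≤ (p:ℝ)/n) (by positivity : (0:ℝ) ≤ (q:ℝ)/n)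
    (by positivity : (0:ℝ) ≤ (r:ℝ)/n) hu hv hw hsum
  have hd : (u ^ ((p:ℝ)/n) * v ^ ((q:ℝ)/n) * w ^ ((r:ℝ)/n)) ^ n = c ^ n := by
    rw [mul_pow, mul_pow, rpow_frac_pow u hu p n hn', rpow_frac_pow v hv q n hn',
      rpow_frac_pow w hw r n hn', h]
  have hce : c = u ^ ((p:ℝ)/n) * v ^ ((q:ℝ)/n) * w ^ ((r:ℝ)/n) :=
    ((pow_left_inj₀ (by positivity) hc hn).mp hd).symm
  linarith [hce ▸ key]

set_option maxHeartbeats 2000000 in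
theorem stmt_4 (x1 x2 x3 y1 y2 y3 : ℝ)
    (hx1 : 0 ≤ x1) (hx2 : 0 ≤ x2) (hx3 : 0 ≤ x3)
    (hy1 : 0 ≤ y1) (hy2 : 0 ≤ y2) (hy3 : 0 ≤ y3) :
    120 * x1 ^ (7:ℕ) * y1 ^ (3:ℕ) + 120 * x1 ^ (3:ℕ) * y1 ^ (7:ℕ) +
    56 * x2 ^ (5:ℕ) * y2 ^ (3:ℕ) + 56 * x2 ^ (3:ℕ) * y2 ^ (5:ℕ) +
    15 * x3 ^ (4:ℕ) * y3 ^ (2:ℕ) + 15 * x3 ^ (2:ℕ) * y3 ^ (4:ℕ) ≤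
    120 * ((x1 ^ (10:ℕ) + x2 ^ (8:ℕ) + x3 ^ (6:ℕ)) ^ ((1:ℝ)/10)) ^ (7:ℕ) *
      ((y1 ^ (10:ℕ) + y2 ^ (8:ℕ) + y3 ^ (6:ℕ)) ^ ((1:ℝ)/10)) ^ (3:ℕ) +
    120 * ((x1 ^ (10:ℕ) + x2 ^ (8:ℕ) + x3 ^ (6:ℕ)) ^ ((1:ℝ)/10)) ^ (3:ℕ) *
      ((y1 ^ (10:ℕ) + y2 ^ (8:ℕ) + y3 ^ (6:ℕ)) ^ ((1:ℝ)/10)) ^ (7:ℕ) := by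
  set a : ℝ := x1 ^ (10:ℕ) + x2 ^ (8:ℕ) + x3 ^ (6:ℕ) with ha_def
  set b : ℝ := y1 ^ (10:ℕ) + y2 ^ (8:ℕ) + y3 ^ (6:ℕ) with hb_def
  have ha : 0 ≤ a := by positivity
  have hb : 0 ≤ b := by positivity
  set A : ℝ := a ^ ((1:ℝ)/10) with hA_def
  set B : ℝ := b ^ ((1:ℝ)/10) with hB_def
  have hA : 0 ≤ A := Real.rpow_nonneg ha _
  have hB : 0 ≤ B := Real.rpow_nonneg hb _
  have hA10 : A ^ (10:ℕ) = a := by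
    rw [hA_def, ← Real.rpow_natCast (a ^ ((1:ℝ)/10)) 10, ← Real.rpow_mul ha]
    norm_num
  have hB10 : B ^ (10:ℕ) = b := by
    rw [hB_def, ← Real.rpow_natCast (b ^ ((1:ℝ)/10)) 10, ← Real.rpow_mul hb]
    norm_num
  rcases eq_or_lt_of_le ha with ha0 | ha0
  · have h1 : x1 = 0 := by
      have : x1 ^ (10:ℕ) = 0 := by nlinarith [pow_nonneg hx1 10, pow_nonneg hx2 8, pow_nonneg hx3 6]
      exact pow_eq_zero_iff (by norm_num) |>.mp this
    have h2 : x2 = 0 := by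
      have : x2 ^ (8:ℕ) = 0 := by nlinarith [pow_nonneg hx1 10, pow_nonneg hx2 8, pow_nonneg hx3 6]
      exact pow_eq_zero_iff (by norm_num) |>.mp this
    have h3 : x3 = 0 := by
      have : x3 ^ (6:ℕ) = 0 := by nlinarith [pow_nonneg hx1 10, pow_nonneg hx2 8, pow_nonneg hx3 6]
      exact pow_eq_zero_iff (by norm_num) |>.mp this
    rw [h1, h2, h3]
    have : (0:ℝ) ≤ 120 * A ^ (7:ℕ) * B ^ (3:ℕ) + 120 * A ^ (3:ℕ) * B ^ (7:ℕ) := by positivity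
    simpa using this
  rcases eq_or_lt_of_le hb with hb0 | hb0
  · have h1 : y1 = 0 := by
      have : y1 ^ (10:ℕ) = 0 := by nlinarith [pow_nonneg hy1 10, pow_nonneg hy2 8, pow_nonneg hy3 6]
      exact pow_eq_zero_iff (by norm_num) |>.mp this
    have h2 : y2 = 0 := by
      have : y2 ^ (8:ℕ) = 0 := by nlinarith [pow_nonneg hy1 10, pow_nonneg hy2 8, pow_nonneg hy3 6]
      exact pow_eq_zero_iff (by norm_num) |>.mp this
    have h3 : y3 = 0 := by
      have : y3 ^ (6:ℕ) = 0 := by nlinarith [pow_nonneg hy1 10, pow_nonneg hy2 8, pow_nonneg hy3 6]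
      exact pow_eq_zero_iff (by norm_num) |>.mp this
    rw [h1, h2, h3]
    have : (0:ℝ) ≤ 120 * A ^ (7:ℕ) * B ^ (3:ℕ) + 120 * A ^ (3:ℕ) * B ^ (7:ℕ) := by positivity
    simpa using this
  have hApos : 0 < A := Real.rpow_pos_of_pos ha0 _
  have hBpos : 0 < B := Real.rpow_pos_of_pos hb0 _
  -- six AM-GM inequalities (all multiplied through by A^10 * B^10)
  have L1 : x1^7*y1^3*(A^10*B^10) ≤ (7:ℝ)/10 * (x1^10*A^7*B^13) + (3:ℝ)/10 * (y1^10*A^17*B^3) := by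
    have := amgm2 10 7 3 (by norm_num) (by norm_num)
      (x1^10*A^7*B^13) (y1^10*A^17*B^3) (x1^7*y1^3*(A^10*B^10))
      (by positivity) (by positivity) (by positivity) (by ring)
    norm_num at this ⊢; linarith
  have L1' : x1^3*y1^7*(A^10*B^10) ≤ (7:ℝ)/10 * (y1^10*A^13*B^7) + (3:ℝ)/10 * (x1^10*A^3*B^17) := by
    have := amgm2 10 7 3 (by norm_num) (by norm_num)
      (y1^10*A^13*B^7) (x1^10*A^3*B^17) (x1^3*y1^7*(A^10*B^10))
      (by positivity) (by positivity) (by positivity) (by ring)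
    norm_num at this ⊢; linarith
  have L2 : x2^5*y2^3*(A^10*B^10) ≤ (10:ℝ)/16 * (x2^8*A^7*B^13) + (3:ℝ)/16 * (y2^8*A^17*B^3)
      + (3:ℝ)/16 * (y2^8*A^13*B^7) := by
    have := amgm3 16 10 3 3 (by norm_num) (by norm_num)
      (x2^8*A^7*B^13) (y2^8*A^17*B^3) (y2^8*A^13*B^7) (x2^5*y2^3*(A^10*B^10))
      (by positivity) (by positivity) (by positivity) (by positivity) (by ring)
    norm_num at this ⊢; linarith
  have L2' : x2^3*y2^5*(A^10*B^10) ≤ (10:ℝ)/16 * (y2^8*A^13*B^7) + (3:ℝ)/16 * (x2^8*A^3*B^17)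
      + (3:ℝ)/16 * (x2^8*A^7*B^13) := by
    have := amgm3 16 10 3 3 (by norm_num) (by norm_num)
      (y2^8*A^13*B^7) (x2^8*A^3*B^17) (x2^8*A^7*B^13) (x2^3*y2^5*(A^10*B^10))
      (by positivity) (by positivity) (by positivity) (by positivity) (by ring)
    norm_num at this ⊢; linarith
  have L3 : x3^4*y3^2*(A^10*B^10) ≤ (8:ℝ)/12 * (x3^6*A^7*B^13) + (3:ℝ)/12 * (y3^6*A^17*B^3)
      + (1:ℝ)/12 * (y3^6*A^13*B^7) := by
    have := amgm3 12 8 3 1 (by norm_num) (by norm_num)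
      (x3^6*A^7*B^13) (y3^6*A^17*B^3) (y3^6*A^13*B^7) (x3^4*y3^2*(A^10*B^10))
      (by positivity) (by positivity) (by positivity) (by positivity) (by ring)
    norm_num at this ⊢; linarith
  have L3' : x3^2*y3^4*(A^10*B^10) ≤ (8:ℝ)/12 * (y3^6*A^13*B^7) + (3:ℝ)/12 * (x3^6*A^3*B^17)
      + (1:ℝ)/12 * (x3^6*A^7*B^13) := by
    have := amgm3 12 8 3 1 (by norm_num) (by norm_num)
      (y3^6*A^13*B^7) (x3^6*A^3*B^17) (x3^6*A^7*B^13) (x3^2*y3^4*(A^10*B^10))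
      (by positivity) (by positivity) (by positivity) (by positivity) (by ring)
    norm_num at this ⊢; linarith
  -- combine
  have hax : x1 ^ (10:ℕ) + x2 ^ (8:ℕ) + x3 ^ (6:ℕ) = A ^ (10:ℕ) := hA10.symm
  have hby : y1 ^ (10:ℕ) + y2 ^ (8:ℕ) + y3 ^ (6:ℕ) = B ^ (10:ℕ) := hB10.symm
  have e1 : A^7*B^13*(x1 ^ (10:ℕ) + x2 ^ (8:ℕ) + x3 ^ (6:ℕ)) = A^17*B^13 := by rw [hax]; ring
  have e2 : A^17*B^3*(y1 ^ (10:ℕ) + y2 ^ (8:ℕ) + y3 ^ (6:ℕ)) = A^17*B^13 := by rw [hby]; ring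
  have e3 : A^13*B^7*(y1 ^ (10:ℕ) + y2 ^ (8:ℕ) + y3 ^ (6:ℕ)) = A^13*B^17 := by rw [hby]; ring
  have e4 : A^3*B^17*(x1 ^ (10:ℕ) + x2 ^ (8:ℕ) + x3 ^ (6:ℕ)) = A^13*B^17 := by rw [hax]; ring
  have p1 : (0:ℝ) ≤ A^7*B^13*x2^8 := by positivity
  have p2 : (0:ℝ) ≤ A^7*B^13*x3^6 := by positivity
  have p3 : (0:ℝ) ≤ A^17*B^3*y2^8 := by positivity
  have p4 : (0:ℝ) ≤ A^17*B^3*y3^6 := by positivity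
  have p5 : (0:ℝ) ≤ A^13*B^7*y2^8 := by positivity
  have p6 : (0:ℝ) ≤ A^13*B^7*y3^6 := by positivity
  have p7 : (0:ℝ) ≤ A^3*B^17*x2^8 := by positivity
  have p8 : (0:ℝ) ≤ A^3*B^17*x3^6 := by positivity
  have key : (120 * x1 ^ (7:ℕ) * y1 ^ (3:ℕ) + 120 * x1 ^ (3:ℕ) * y1 ^ (7:ℕ) +
      56 * x2 ^ (5:ℕ) * y2 ^ (3:ℕ) + 56 * x2 ^ (3:ℕ) * y2 ^ (5:ℕ) +
      15 * x3 ^ (4:ℕ) * y3 ^ (2:ℕ) + 15 * x3 ^ (2:ℕ) * y3 ^ (4:ℕ)) * (A^10*B^10) ≤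
      (120 * A ^ (7:ℕ) * B ^ (3:ℕ) + 120 * A ^ (3:ℕ) * B ^ (7:ℕ)) * (A^10*B^10) := by
    linarith [L1, L1', L2, L2', L3, L3', e1, e2, e3, e4, p1, p2, p3, p4, p5, p6, p7, p8]
  have hAB : (0:ℝ) < A^10*B^10 := by positivity
  exact le_of_mul_le_mul_right key hAB
end

section
/- For nonnegative reals x1, x2, x4, y1, y2, y4, with A = (x1^{10} + x2^8 + x4^4)^{1/10} and B = (y1^{10} + y2^8 + y4^4)^{1/10}, one has 45 x1^8 y1^2 + 45 x1^2 y1^8 + 28 x2^6 y2^2 + 28 x2^2 y2^6 + 4 x4^3 y4 + 4 x4 y4^3 ≤ 45 A^8 B^2 + 45 A^2 B^8. -/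
open Real

private lemma key_term (a b S T : ℝ) (ha : 0 ≤ a) (hb : 0 ≤ b) (hS : 0 < S) (hT : 0 < T) :
    a ^ ((4:ℝ)/5) * b ^ ((1:ℝ)/5) ≤
      S ^ ((4:ℝ)/5) * T ^ ((1:ℝ)/5) * (4/5 * (a/S) + 1/5 * (b/T)) := by
  have hg := Real.geom_mean_le_arith_mean2_weighted (by norm_num : (0:ℝ) ≤ 4/5)
    (by norm_num : (0:ℝ) ≤ 1/5) (div_nonneg ha hS.le) (div_nonneg hb hT.le) (by norm_num)
  have e : (a/S) ^ ((4:ℝ)/5) * (b/T) ^ ((1:ℝ)/5)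
      = a ^ ((4:ℝ)/5) * b ^ ((1:ℝ)/5) / (S ^ ((4:ℝ)/5) * T ^ ((1:ℝ)/5)) := by
    rw [Real.div_rpow ha hS.le, Real.div_rpow hb hT.le]; ring
  rw [e] at hg
  have hpos : 0 < S ^ ((4:ℝ)/5) * T ^ ((1:ℝ)/5) := by positivity
  calc a ^ ((4:ℝ)/5) * b ^ ((1:ℝ)/5)
      = S ^ ((4:ℝ)/5) * T ^ ((1:ℝ)/5) *
        (a ^ ((4:ℝ)/5) * b ^ ((1:ℝ)/5) / (S ^ ((4:ℝ)/5) * T ^ ((1:ℝ)/5))) := by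
        field_simp
    _ ≤ _ := mul_le_mul_of_nonneg_left hg hpos.le

private lemma holder3 (a1 a2 a3 b1 b2 b3 : ℝ) (ha1 : 0 ≤ a1) (ha2 : 0 ≤ a2) (ha3 : 0 ≤ a3)
    (hb1 : 0 ≤ b1) (hb2 : 0 ≤ b2) (hb3 : 0 ≤ b3) :
    a1 ^ ((4:ℝ)/5) * b1 ^ ((1:ℝ)/5) + a2 ^ ((4:ℝ)/5) * b2 ^ ((1:ℝ)/5) +
      a3 ^ ((4:ℝ)/5) * b3 ^ ((1:ℝ)/5) ≤
      (a1 + a2 + a3) ^ ((4:ℝ)/5) * (b1 + b2 + b3) ^ ((1:ℝ)/5) := by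
  have hS : 0 ≤ a1 + a2 + a3 := by linarith
  have hT : 0 ≤ b1 + b2 + b3 := by linarith
  rcases hS.eq_or_lt with hS0 | hSpos
  · have h1 : a1 = 0 := by linarith
    have h2 : a2 = 0 := by linarith
    have h3 : a3 = 0 := by linarith
    simp [h1, h2, h3, Real.zero_rpow (by norm_num : (4:ℝ)/5 ≠ 0)]
  rcases hT.eq_or_lt with hT0 | hTpos
  · have h1 : b1 = 0 := by linarith
    have h2 : b2 = 0 := by linarith
    have h3 : b3 = 0 := by linarith
    simp [h1, h2, h3, Real.zero_rpow (by norm_num : (1:ℝ)/5 ≠ 0)]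
  set S := a1 + a2 + a3 with hSdef
  set T := b1 + b2 + b3 with hTdef
  have k1 := key_term a1 b1 S T ha1 hb1 hSpos hTpos
  have k2 := key_term a2 b2 S T ha2 hb2 hSpos hTpos
  have k3 := key_term a3 b3 S T ha3 hb3 hSpos hTpos
  have hsum : S ^ ((4:ℝ)/5) * T ^ ((1:ℝ)/5) * (4/5 * (a1/S) + 1/5 * (b1/T)) +
      S ^ ((4:ℝ)/5) * T ^ ((1:ℝ)/5) * (4/5 * (a2/S) + 1/5 * (b2/T)) +
      S ^ ((4:ℝ)/5) * T ^ ((1:ℝ)/5) * (4/5 * (a3/S) + 1/5 * (b3/T))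
      = S ^ ((4:ℝ)/5) * T ^ ((1:ℝ)/5) := by
    have : (4/5 * (a1/S) + 1/5 * (b1/T)) + (4/5 * (a2/S) + 1/5 * (b2/T)) +
        (4/5 * (a3/S) + 1/5 * (b3/T)) = 1 := by
      field_simp
      ring
    linear_combination S ^ ((4:ℝ)/5) * T ^ ((1:ℝ)/5) * this
  linarith

private lemma poly_ineq (t s : ℝ) (ht : 0 ≤ t) (hs : 0 ≤ s) :
    t ^ (15:ℕ) * s ^ (5:ℕ) + t ^ (5:ℕ) * s ^ (15:ℕ) ≤
      t ^ (16:ℕ) * s ^ (4:ℕ) + t ^ (4:ℕ) * s ^ (16:ℕ) := by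
  have h : 0 ≤ (t - s) * (t ^ (11:ℕ) - s ^ (11:ℕ)) := by
    rcases le_total t s with h' | h'
    · have : t ^ (11:ℕ) ≤ s ^ (11:ℕ) := pow_le_pow_left₀ ht h' 11
      nlinarith
    · have : s ^ (11:ℕ) ≤ t ^ (11:ℕ) := pow_le_pow_left₀ hs h' 11
      nlinarith
  nlinarith [mul_nonneg (mul_nonneg (pow_nonneg ht 4) (pow_nonneg hs 4)) h]

private lemma comb (x y : ℝ) (hx : 0 ≤ x) (hy : 0 ≤ y) (c : ℝ) (hc : 0 < c) :
    x ^ (3*c) * y ^ c + x ^ c * y ^ (3*c) ≤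
      x ^ (16*c/5) * y ^ (4*c/5) + x ^ (4*c/5) * y ^ (16*c/5) := by
  have e : ∀ z : ℝ, 0 ≤ z → ∀ n : ℕ, (z ^ (c/5)) ^ n = z ^ (c/5 * n) := by
    intro z hz n
    rw [← Real.rpow_natCast (z ^ (c/5)) n, ← Real.rpow_mul hz]
  have e15x : x ^ (3*c) = (x ^ (c/5)) ^ (15:ℕ) := by rw [e x hx 15]; norm_num; ring_nf
  have e5x : x ^ c = (x ^ (c/5)) ^ (5:ℕ) := by rw [e x hx 5]; norm_num
  have e16x : x ^ (16*c/5) = (x ^ (c/5)) ^ (16:ℕ) := by rw [e x hx 16]; norm_num; ring_nf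
  have e4x : x ^ (4*c/5) = (x ^ (c/5)) ^ (4:ℕ) := by rw [e x hx 4]; norm_num; ring_nf
  have e15y : y ^ (3*c) = (y ^ (c/5)) ^ (15:ℕ) := by rw [e y hy 15]; norm_num; ring_nf
  have e5y : y ^ c = (y ^ (c/5)) ^ (5:ℕ) := by rw [e y hy 5]; norm_num
  have e16y : y ^ (16*c/5) = (y ^ (c/5)) ^ (16:ℕ) := by rw [e y hy 16]; norm_num; ring_nf
  have e4y : y ^ (4*c/5) = (y ^ (c/5)) ^ (4:ℕ) := by rw [e y hy 4]; norm_num; ring_nf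
  rw [e15x, e5x, e16x, e4x, e15y, e5y, e16y, e4y]
  exact poly_ineq _ _ (Real.rpow_nonneg hx _) (Real.rpow_nonneg hy _)


private lemma pow_rpow (x : ℝ) (hx : 0 ≤ x) (n : ℕ) (r q : ℝ) (h : (n:ℝ) * r = q) :
    (x ^ n) ^ r = x ^ q := by
  rw [← Real.rpow_natCast x n, ← Real.rpow_mul hx, h]

private lemma rpow_nat' (x : ℝ) (n : ℕ) (q : ℝ) (h : q = (n:ℝ)) : x ^ q = x ^ n := by
  rw [h, Real.rpow_natCast]

private lemma rpow_pow (x : ℝ) (hx : 0 ≤ x) (r : ℝ) (n : ℕ) (q : ℝ) (h : r * (n:ℝ) = q) :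
    (x ^ r) ^ n = x ^ q := by
  rw [← Real.rpow_natCast (x ^ r) n, ← Real.rpow_mul hx, h]

private lemma comb8 (x y : ℝ) (hx : 0 ≤ x) (hy : 0 ≤ y) :
    x ^ (6:ℕ) * y ^ (2:ℕ) + x ^ (2:ℕ) * y ^ (6:ℕ) ≤
      (x ^ (8:ℕ)) ^ ((4:ℝ)/5) * (y ^ (8:ℕ)) ^ ((1:ℝ)/5) +
      (x ^ (8:ℕ)) ^ ((1:ℝ)/5) * (y ^ (8:ℕ)) ^ ((4:ℝ)/5) := by
  have h := comb x y hx hy 2 (by norm_num)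
  rw [show (3:ℝ)*2 = 6 by norm_num, show (16:ℝ)*2/5 = 32/5 by norm_num,
    show (4:ℝ)*2/5 = 8/5 by norm_num] at h
  rw [rpow_nat' x 6 6 (by norm_num), rpow_nat' y 2 2 (by norm_num),
    rpow_nat' x 2 2 (by norm_num), rpow_nat' y 6 6 (by norm_num),
    ← pow_rpow x hx 8 ((4:ℝ)/5) (32/5) (by norm_num),
    ← pow_rpow x hx 8 ((1:ℝ)/5) (8/5) (by norm_num),
    ← pow_rpow y hy 8 ((4:ℝ)/5) (32/5) (by norm_num),
    ← pow_rpow y hy 8 ((1:ℝ)/5) (8/5) (by norm_num)] at h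
  linarith

private lemma comb4 (x y : ℝ) (hx : 0 ≤ x) (hy : 0 ≤ y) :
    x ^ (3:ℕ) * y + x * y ^ (3:ℕ) ≤
      (x ^ (4:ℕ)) ^ ((4:ℝ)/5) * (y ^ (4:ℕ)) ^ ((1:ℝ)/5) +
      (x ^ (4:ℕ)) ^ ((1:ℝ)/5) * (y ^ (4:ℕ)) ^ ((4:ℝ)/5) := by
  have h := comb x y hx hy 1 (by norm_num)
  rw [show (3:ℝ)*1 = 3 by norm_num, show (16:ℝ)*1/5 = 16/5 by norm_num,
    show (4:ℝ)*1/5 = 4/5 by norm_num] at h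
  rw [rpow_nat' x 3 3 (by norm_num), rpow_nat' y 3 3 (by norm_num),
    Real.rpow_one, Real.rpow_one,
    ← pow_rpow x hx 4 ((4:ℝ)/5) (16/5) (by norm_num),
    ← pow_rpow x hx 4 ((1:ℝ)/5) (4/5) (by norm_num),
    ← pow_rpow y hy 4 ((4:ℝ)/5) (16/5) (by norm_num),
    ← pow_rpow y hy 4 ((1:ℝ)/5) (4/5) (by norm_num)] at h
  linarith

theorem stmt_5 (x1 x2 x4 y1 y2 y4 : ℝ)
    (hx1 : 0 ≤ x1) (hx2 : 0 ≤ x2) (hx4 : 0 ≤ x4)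
    (hy1 : 0 ≤ y1) (hy2 : 0 ≤ y2) (hy4 : 0 ≤ y4) :
    45 * x1 ^ (8:ℕ) * y1 ^ (2:ℕ) + 45 * x1 ^ (2:ℕ) * y1 ^ (8:ℕ) +
    28 * x2 ^ (6:ℕ) * y2 ^ (2:ℕ) + 28 * x2 ^ (2:ℕ) * y2 ^ (6:ℕ) +
    4 * x4 ^ (3:ℕ) * y4 + 4 * x4 * y4 ^ (3:ℕ) ≤
    45 * ((x1 ^ (10:ℕ) + x2 ^ (8:ℕ) + x4 ^ (4:ℕ)) ^ ((1:ℝ)/10)) ^ (8:ℕ) *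
      ((y1 ^ (10:ℕ) + y2 ^ (8:ℕ) + y4 ^ (4:ℕ)) ^ ((1:ℝ)/10)) ^ (2:ℕ) +
    45 * ((x1 ^ (10:ℕ) + x2 ^ (8:ℕ) + x4 ^ (4:ℕ)) ^ ((1:ℝ)/10)) ^ (2:ℕ) *
      ((y1 ^ (10:ℕ) + y2 ^ (8:ℕ) + y4 ^ (4:ℕ)) ^ ((1:ℝ)/10)) ^ (8:ℕ) := by
  have hS : 0 ≤ x1 ^ (10:ℕ) + x2 ^ (8:ℕ) + x4 ^ (4:ℕ) := by positivity
  have hT : 0 ≤ y1 ^ (10:ℕ) + y2 ^ (8:ℕ) + y4 ^ (4:ℕ) := by positivity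
  rw [rpow_pow _ hS ((1:ℝ)/10) 8 ((4:ℝ)/5) (by norm_num),
    rpow_pow _ hS ((1:ℝ)/10) 2 ((1:ℝ)/5) (by norm_num),
    rpow_pow _ hT ((1:ℝ)/10) 8 ((4:ℝ)/5) (by norm_num),
    rpow_pow _ hT ((1:ℝ)/10) 2 ((1:ℝ)/5) (by norm_num)]
  have H1 := holder3 (x1 ^ (10:ℕ)) (x2 ^ (8:ℕ)) (x4 ^ (4:ℕ)) (y1 ^ (10:ℕ)) (y2 ^ (8:ℕ))
    (y4 ^ (4:ℕ)) (by positivity) (by positivity) (by positivity) (by positivity)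
    (by positivity) (by positivity)
  have H2 := holder3 (y1 ^ (10:ℕ)) (y2 ^ (8:ℕ)) (y4 ^ (4:ℕ)) (x1 ^ (10:ℕ)) (x2 ^ (8:ℕ))
    (x4 ^ (4:ℕ)) (by positivity) (by positivity) (by positivity) (by positivity)
    (by positivity) (by positivity)
  have E1 : (x1 ^ (10:ℕ)) ^ ((4:ℝ)/5) = x1 ^ (8:ℕ) :=
    (pow_rpow x1 hx1 10 ((4:ℝ)/5) 8 (by norm_num)).trans (rpow_nat' x1 8 8 (by norm_num))
  have E2 : (y1 ^ (10:ℕ)) ^ ((1:ℝ)/5) = y1 ^ (2:ℕ) :=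
    (pow_rpow y1 hy1 10 ((1:ℝ)/5) 2 (by norm_num)).trans (rpow_nat' y1 2 2 (by norm_num))
  have E3 : (y1 ^ (10:ℕ)) ^ ((4:ℝ)/5) = y1 ^ (8:ℕ) :=
    (pow_rpow y1 hy1 10 ((4:ℝ)/5) 8 (by norm_num)).trans (rpow_nat' y1 8 8 (by norm_num))
  have E4 : (x1 ^ (10:ℕ)) ^ ((1:ℝ)/5) = x1 ^ (2:ℕ) :=
    (pow_rpow x1 hx1 10 ((1:ℝ)/5) 2 (by norm_num)).trans (rpow_nat' x1 2 2 (by norm_num))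
  rw [E1, E2] at H1
  rw [E3, E4] at H2
  have C2 := comb8 x2 y2 hx2 hy2
  have C4 := comb4 x4 y4 hx4 hy4
  have n1 : 0 ≤ (x2 ^ (8:ℕ)) ^ ((4:ℝ)/5) * (y2 ^ (8:ℕ)) ^ ((1:ℝ)/5) := by positivity
  have n2 : 0 ≤ (x2 ^ (8:ℕ)) ^ ((1:ℝ)/5) * (y2 ^ (8:ℕ)) ^ ((4:ℝ)/5) := by positivity
  have n3 : 0 ≤ (x4 ^ (4:ℕ)) ^ ((4:ℝ)/5) * (y4 ^ (4:ℕ)) ^ ((1:ℝ)/5) := by positivity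
  have n4 : 0 ≤ (x4 ^ (4:ℕ)) ^ ((1:ℝ)/5) * (y4 ^ (4:ℕ)) ^ ((4:ℝ)/5) := by positivity
  nlinarith [H1, H2, C2, C4, n1, n2, n3, n4]
end

section
/- For nonnegative reals x1, x2, x3, y1, y2, y3, with A = (x1^{10} + x2^8 + x3^6)^{1/10} and B = (y1^{10} + y2^8 + y3^6)^{1/10}, one has 10 x1^9 y1 + 10 x1 y1^9 + 8 x2^7 y2 + 8 x2 y2^7 + 6 x3^5 y3 + 6 x3 y3^5 ≤ 10 A^9 B + 10 A B^9. -/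
lemma pow_rpow_eq_pow (x : ℝ) (hx : 0 ≤ x) (n m : ℕ) (q : ℝ) (h : (n:ℝ) * q = (m:ℕ)) :
    ((x ^ n : ℝ)) ^ q = x ^ m := by
  rw [← Real.rpow_natCast x n, ← Real.rpow_mul hx, h, Real.rpow_natCast]

lemma pow_rpow_eq_fifth (x : ℝ) (hx : 0 ≤ x) (n m : ℕ) (q : ℝ)
    (h : (n:ℝ) * q = (1:ℝ)/5 * (m:ℕ)) :
    ((x ^ n : ℝ)) ^ q = (x ^ ((1:ℝ)/5)) ^ m := by
  rw [← Real.rpow_natCast x n, ← Real.rpow_mul hx, h, Real.rpow_mul hx, Real.rpow_natCast]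

lemma fifth_pow (x : ℝ) (hx : 0 ≤ x) : x = (x ^ ((1:ℝ)/5)) ^ (5:ℕ) := by
  rw [← Real.rpow_natCast (x ^ ((1:ℝ)/5)) 5, ← Real.rpow_mul hx]
  norm_num

lemma cobb_superadd {w : ℝ} (hw0 : 0 < w) (hw1 : w < 1)
    (a b c d : ℝ) (ha : 0 ≤ a) (hb : 0 ≤ b) (hc : 0 ≤ c) (hd : 0 ≤ d) :
    a ^ w * b ^ (1 - w) + c ^ w * d ^ (1 - w) ≤ (a + c) ^ w * (b + d) ^ (1 - w) := by
  rcases eq_or_lt_of_le (add_nonneg ha hc) with hS | hS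
  · have ha0 : a = 0 := by linarith
    have hc0 : c = 0 := by linarith
    simp [ha0, hc0, Real.zero_rpow hw0.ne']
  rcases eq_or_lt_of_le (add_nonneg hb hd) with hT | hT
  · have hb0 : b = 0 := by linarith
    have hd0 : d = 0 := by linarith
    simp [hb0, hd0, Real.zero_rpow (by linarith : (1:ℝ) - w ≠ 0)]
  set S := a + c with hSdef
  set T := b + d with hTdef
  have hM : (0:ℝ) ≤ S ^ w * T ^ (1 - w) := by positivity
  have key : ∀ p r : ℝ, 0 ≤ p → 0 ≤ r →
      p ^ w * r ^ (1 - w) ≤ (w * (p / S) + (1 - w) * (r / T)) * (S ^ w * T ^ (1 - w)) := by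
    intro p r hp hr
    have hg := Real.geom_mean_le_arith_mean2_weighted (w₁ := w) (w₂ := 1 - w)
      (p₁ := p / S) (p₂ := r / T) hw0.le (by linarith)
      (div_nonneg hp hS.le) (div_nonneg hr hT.le) (by ring)
    calc p ^ w * r ^ (1 - w)
        = ((p / S) ^ w * (r / T) ^ (1 - w)) * (S ^ w * T ^ (1 - w)) := by
          rw [Real.div_rpow hp hS.le, Real.div_rpow hr hT.le]
          have h1 : S ^ w ≠ 0 := by positivity
          have h2 : T ^ (1 - w) ≠ 0 := by positivity
          field_simp
      _ ≤ (w * (p / S) + (1 - w) * (r / T)) * (S ^ w * T ^ (1 - w)) :=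
          mul_le_mul_of_nonneg_right hg hM
  have h1 := key a b ha hb
  have h2 := key c d hc hd
  have hsum : (w * (a / S) + (1 - w) * (b / T)) + (w * (c / S) + (1 - w) * (d / T)) = 1 := by
    field_simp
    ring
  calc a ^ w * b ^ (1 - w) + c ^ w * d ^ (1 - w)
      ≤ ((w * (a / S) + (1 - w) * (b / T)) + (w * (c / S) + (1 - w) * (d / T)))
          * (S ^ w * T ^ (1 - w)) := by rw [add_mul]; exact add_le_add h1 h2
    _ = S ^ w * T ^ (1 - w) := by rw [hsum, one_mul]

lemma pair8 (x y : ℝ) (hx : 0 ≤ x) (hy : 0 ≤ y) :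
    8 * x ^ (7:ℕ) * y + 8 * x * y ^ (7:ℕ) ≤
    10 * ((x ^ (8:ℕ) : ℝ)) ^ ((9:ℝ)/10) * ((y ^ (8:ℕ) : ℝ)) ^ ((1:ℝ)/10)
      + 10 * ((x ^ (8:ℕ) : ℝ)) ^ ((1:ℝ)/10) * ((y ^ (8:ℕ) : ℝ)) ^ ((9:ℝ)/10) := by
  rw [pow_rpow_eq_fifth x hx 8 36 ((9:ℝ)/10) (by norm_num),
      pow_rpow_eq_fifth y hy 8 4 ((1:ℝ)/10) (by norm_num),
      pow_rpow_eq_fifth x hx 8 4 ((1:ℝ)/10) (by norm_num),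
      pow_rpow_eq_fifth y hy 8 36 ((9:ℝ)/10) (by norm_num)]
  set u := x ^ ((1:ℝ)/5) with hu_def
  set v := y ^ ((1:ℝ)/5) with hv_def
  have hu : 0 ≤ u := Real.rpow_nonneg hx _
  have hv : 0 ≤ v := Real.rpow_nonneg hy _
  rw [show x = u ^ (5:ℕ) from fifth_pow x hx, show y = v ^ (5:ℕ) from fifth_pow y hy]
  have key : 0 ≤ (u ^ 31 - v ^ 31) * (u - v) := by
    rcases le_total u v with h | h
    · nlinarith [mul_nonneg (sub_nonneg.2 (pow_le_pow_left₀ hu h 31)) (sub_nonneg.2 h)]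
    · nlinarith [mul_nonneg (sub_nonneg.2 (pow_le_pow_left₀ hv h 31)) (sub_nonneg.2 h)]
  nlinarith [mul_nonneg (mul_nonneg (pow_nonneg hu 4) (pow_nonneg hv 4)) key,
    mul_nonneg (mul_nonneg (pow_nonneg hu 4) (pow_nonneg hv 4))
      (add_nonneg (pow_nonneg hu 32) (pow_nonneg hv 32))]

lemma pair6 (x y : ℝ) (hx : 0 ≤ x) (hy : 0 ≤ y) :
    6 * x ^ (5:ℕ) * y + 6 * x * y ^ (5:ℕ) ≤
    10 * ((x ^ (6:ℕ) : ℝ)) ^ ((9:ℝ)/10) * ((y ^ (6:ℕ) : ℝ)) ^ ((1:ℝ)/10)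
      + 10 * ((x ^ (6:ℕ) : ℝ)) ^ ((1:ℝ)/10) * ((y ^ (6:ℕ) : ℝ)) ^ ((9:ℝ)/10) := by
  rw [pow_rpow_eq_fifth x hx 6 27 ((9:ℝ)/10) (by norm_num),
      pow_rpow_eq_fifth y hy 6 3 ((1:ℝ)/10) (by norm_num),
      pow_rpow_eq_fifth x hx 6 3 ((1:ℝ)/10) (by norm_num),
      pow_rpow_eq_fifth y hy 6 27 ((9:ℝ)/10) (by norm_num)]
  set u := x ^ ((1:ℝ)/5) with hu_def
  set v := y ^ ((1:ℝ)/5) with hv_def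
  have hu : 0 ≤ u := Real.rpow_nonneg hx _
  have hv : 0 ≤ v := Real.rpow_nonneg hy _
  rw [show x = u ^ (5:ℕ) from fifth_pow x hx, show y = v ^ (5:ℕ) from fifth_pow y hy]
  have key : 0 ≤ (u ^ 22 - v ^ 22) * (u ^ 2 - v ^ 2) := by
    rcases le_total u v with h | h
    · nlinarith [mul_nonneg (sub_nonneg.2 (pow_le_pow_left₀ hu h 22)) (sub_nonneg.2 (pow_le_pow_left₀ hu h 2))]
    · nlinarith [mul_nonneg (sub_nonneg.2 (pow_le_pow_left₀ hv h 22)) (sub_nonneg.2 (pow_le_pow_left₀ hv h 2))]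
  nlinarith [mul_nonneg (mul_nonneg (pow_nonneg hu 3) (pow_nonneg hv 3)) key,
    mul_nonneg (mul_nonneg (pow_nonneg hu 3) (pow_nonneg hv 3))
      (add_nonneg (pow_nonneg hu 24) (pow_nonneg hv 24))]

theorem stmt_6 (x1 x2 x3 y1 y2 y3 : ℝ)
    (hx1 : 0 ≤ x1) (hx2 : 0 ≤ x2) (hx3 : 0 ≤ x3)
    (hy1 : 0 ≤ y1) (hy2 : 0 ≤ y2) (hy3 : 0 ≤ y3) :
    10 * x1 ^ (9:ℕ) * y1 + 10 * x1 * y1 ^ (9:ℕ) +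
    8 * x2 ^ (7:ℕ) * y2 + 8 * x2 * y2 ^ (7:ℕ) +
    6 * x3 ^ (5:ℕ) * y3 + 6 * x3 * y3 ^ (5:ℕ) ≤
    10 * ((x1 ^ (10:ℕ) + x2 ^ (8:ℕ) + x3 ^ (6:ℕ)) ^ ((1:ℝ)/10)) ^ (9:ℕ) *
      ((y1 ^ (10:ℕ) + y2 ^ (8:ℕ) + y3 ^ (6:ℕ)) ^ ((1:ℝ)/10)) +
    10 * ((x1 ^ (10:ℕ) + x2 ^ (8:ℕ) + x3 ^ (6:ℕ)) ^ ((1:ℝ)/10)) *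
      ((y1 ^ (10:ℕ) + y2 ^ (8:ℕ) + y3 ^ (6:ℕ)) ^ ((1:ℝ)/10)) ^ (9:ℕ) := by
  have ha1 : (0:ℝ) ≤ x1 ^ (10:ℕ) := by positivity
  have ha2 : (0:ℝ) ≤ x2 ^ (8:ℕ) := by positivity
  have ha3 : (0:ℝ) ≤ x3 ^ (6:ℕ) := by positivity
  have hb1 : (0:ℝ) ≤ y1 ^ (10:ℕ) := by positivity
  have hb2 : (0:ℝ) ≤ y2 ^ (8:ℕ) := by positivity
  have hb3 : (0:ℝ) ≤ y3 ^ (6:ℕ) := by positivity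
  have hA : (0:ℝ) ≤ x1 ^ (10:ℕ) + x2 ^ (8:ℕ) + x3 ^ (6:ℕ) := by positivity
  have hB : (0:ℝ) ≤ y1 ^ (10:ℕ) + y2 ^ (8:ℕ) + y3 ^ (6:ℕ) := by positivity
  -- rewrite the RHS
  have eA9 : ((x1 ^ (10:ℕ) + x2 ^ (8:ℕ) + x3 ^ (6:ℕ)) ^ ((1:ℝ)/10)) ^ (9:ℕ)
      = (x1 ^ (10:ℕ) + x2 ^ (8:ℕ) + x3 ^ (6:ℕ)) ^ ((9:ℝ)/10) := by
    rw [← Real.rpow_natCast ((x1 ^ (10:ℕ) + x2 ^ (8:ℕ) + x3 ^ (6:ℕ)) ^ ((1:ℝ)/10)) 9,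
        ← Real.rpow_mul hA]
    norm_num
  have eB9 : ((y1 ^ (10:ℕ) + y2 ^ (8:ℕ) + y3 ^ (6:ℕ)) ^ ((1:ℝ)/10)) ^ (9:ℕ)
      = (y1 ^ (10:ℕ) + y2 ^ (8:ℕ) + y3 ^ (6:ℕ)) ^ ((9:ℝ)/10) := by
    rw [← Real.rpow_natCast ((y1 ^ (10:ℕ) + y2 ^ (8:ℕ) + y3 ^ (6:ℕ)) ^ ((1:ℝ)/10)) 9,
        ← Real.rpow_mul hB]
    norm_num
  rw [eA9, eB9]
  have hw9 : (1:ℝ) - 9/10 = 1/10 := by norm_num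
  have hw1 : (1:ℝ) - 1/10 = 9/10 := by norm_num
  -- superadditivity, applied twice for each of the two Cobb-Douglas terms
  have super : ∀ w : ℝ, 0 < w → w < 1 →
      (x1 ^ (10:ℕ) : ℝ) ^ w * (y1 ^ (10:ℕ) : ℝ) ^ (1-w)
        + (x2 ^ (8:ℕ) : ℝ) ^ w * (y2 ^ (8:ℕ) : ℝ) ^ (1-w)
        + (x3 ^ (6:ℕ) : ℝ) ^ w * (y3 ^ (6:ℕ) : ℝ) ^ (1-w)
      ≤ (x1 ^ (10:ℕ) + x2 ^ (8:ℕ) + x3 ^ (6:ℕ)) ^ w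
          * (y1 ^ (10:ℕ) + y2 ^ (8:ℕ) + y3 ^ (6:ℕ)) ^ (1-w) := by
    intro w h0 h1
    calc (x1 ^ (10:ℕ) : ℝ) ^ w * (y1 ^ (10:ℕ) : ℝ) ^ (1-w)
        + (x2 ^ (8:ℕ) : ℝ) ^ w * (y2 ^ (8:ℕ) : ℝ) ^ (1-w)
        + (x3 ^ (6:ℕ) : ℝ) ^ w * (y3 ^ (6:ℕ) : ℝ) ^ (1-w)
        ≤ (x1 ^ (10:ℕ) + x2 ^ (8:ℕ) : ℝ) ^ w * (y1 ^ (10:ℕ) + y2 ^ (8:ℕ) : ℝ) ^ (1-w)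
            + (x3 ^ (6:ℕ) : ℝ) ^ w * (y3 ^ (6:ℕ) : ℝ) ^ (1-w) := by
          have := cobb_superadd h0 h1 _ _ _ _ ha1 hb1 ha2 hb2
          linarith
      _ ≤ _ := cobb_superadd h0 h1 _ _ _ _ (by positivity) (by positivity) ha3 hb3
  have s9 := super ((9:ℝ)/10) (by norm_num) (by norm_num)
  have s1 := super ((1:ℝ)/10) (by norm_num) (by norm_num)
  rw [hw9] at s9
  rw [hw1] at s1
  -- pairwise bounds
  have e1a : ((x1 ^ (10:ℕ) : ℝ)) ^ ((9:ℝ)/10) = x1 ^ (9:ℕ) :=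
    pow_rpow_eq_pow x1 hx1 10 9 _ (by norm_num)
  have e1b : ((y1 ^ (10:ℕ) : ℝ)) ^ ((1:ℝ)/10) = y1 ^ (1:ℕ) :=
    pow_rpow_eq_pow y1 hy1 10 1 _ (by norm_num)
  have e1c : ((x1 ^ (10:ℕ) : ℝ)) ^ ((1:ℝ)/10) = x1 ^ (1:ℕ) :=
    pow_rpow_eq_pow x1 hx1 10 1 _ (by norm_num)
  have e1d : ((y1 ^ (10:ℕ) : ℝ)) ^ ((9:ℝ)/10) = y1 ^ (9:ℕ) :=
    pow_rpow_eq_pow y1 hy1 10 9 _ (by norm_num)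
  have p8 := pair8 x2 y2 hx2 hy2
  have p6 := pair6 x3 y3 hx3 hy3
  have p10 : 10 * x1 ^ (9:ℕ) * y1 + 10 * x1 * y1 ^ (9:ℕ) =
      10 * ((x1 ^ (10:ℕ) : ℝ)) ^ ((9:ℝ)/10) * ((y1 ^ (10:ℕ) : ℝ)) ^ ((1:ℝ)/10)
        + 10 * ((x1 ^ (10:ℕ) : ℝ)) ^ ((1:ℝ)/10) * ((y1 ^ (10:ℕ) : ℝ)) ^ ((9:ℝ)/10) := by
    rw [e1a, e1b, e1c, e1d]; ring
  nlinarith [s9, s1, p8, p6, p10]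
end

section
/- For all nonnegative reals x1,...,x5, y1,...,y5: ((x1+y1)^{10} + (x2+y2)^8 + (x3+y3)^6 + (x4+y4)^4 + (x5+y5)^2)^{1/10} ≤ (x1^{10}+x2^8+x3^6+x4^4+x5^2)^{1/10} + (y1^{10}+y2^8+y3^6+y4^4+y5^2)^{1/10}. -/
private lemma conv_aux (u v l m : ℝ) (hu : 0 ≤ u) (hv : 0 ≤ v) (hl : 0 < l) (hm : 0 < m)
    (hlm : l + m = 1) (d : ℕ) (hd1 : 1 ≤ d) (hd : d ≤ 10) :
    (u + v) ^ d ≤ u ^ d / l ^ 9 + v ^ d / m ^ 9 := by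
  have hl1 : l ≤ 1 := by linarith
  have hm1 : m ≤ 1 := by linarith
  have h1 : (u + v) ^ d ≤ l * (u / l) ^ d + m * (v / m) ^ d := by
    have h := (convexOn_pow d).2 (Set.mem_Ici.mpr (by positivity : (0:ℝ) ≤ u / l))
      (Set.mem_Ici.mpr (by positivity : (0:ℝ) ≤ v / m)) hl.le hm.le hlm
    have e1 : l • (u / l) + m • (v / m) = u + v := by
      simp only [smul_eq_mul]; field_simp
    rw [e1] at h
    simpa [smul_eq_mul] using h
  have key : ∀ (w c : ℝ), 0 ≤ w → 0 < c → c ≤ 1 → c * (w / c) ^ d ≤ w ^ d / c ^ 9 := by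
    intro w c hw hc hc1
    have hcd : c ^ d = c ^ (d - 1) * c := by
      rw [← pow_succ, Nat.sub_add_cancel hd1]
    have e : c * (w / c) ^ d = w ^ d / c ^ (d - 1) := by
      rw [div_pow, hcd]
      field_simp
    rw [e]
    have h9 : c ^ 9 ≤ c ^ (d - 1) := pow_le_pow_of_le_one hc.le hc1 (by omega)
    gcongr
  have h2 := key u l hu hl hl1
  have h3 := key v m hv hm hm1
  linarith

private lemma sum5_zero (a b c d e : ℝ) (ha : 0 ≤ a) (hb : 0 ≤ b) (hc : 0 ≤ c)
    (hd : 0 ≤ d) (he : 0 ≤ e) (h : a + b + c + d + e = 0) :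
    a = 0 ∧ b = 0 ∧ c = 0 ∧ d = 0 ∧ e = 0 :=
  ⟨by linarith, by linarith, by linarith, by linarith, by linarith⟩

theorem stmt_7 (x1 x2 x3 x4 x5 y1 y2 y3 y4 y5 : ℝ)
    (hx1 : 0 ≤ x1) (hx2 : 0 ≤ x2) (hx3 : 0 ≤ x3) (hx4 : 0 ≤ x4) (hx5 : 0 ≤ x5)
    (hy1 : 0 ≤ y1) (hy2 : 0 ≤ y2) (hy3 : 0 ≤ y3) (hy4 : 0 ≤ y4) (hy5 : 0 ≤ y5) :
    ((x1 + y1) ^ (10:ℕ) + (x2 + y2) ^ (8:ℕ) + (x3 + y3) ^ (6:ℕ) + (x4 + y4) ^ (4:ℕ) +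
      (x5 + y5) ^ (2:ℕ)) ^ ((1:ℝ)/10) ≤
    (x1 ^ (10:ℕ) + x2 ^ (8:ℕ) + x3 ^ (6:ℕ) + x4 ^ (4:ℕ) + x5 ^ (2:ℕ)) ^ ((1:ℝ)/10) +
    (y1 ^ (10:ℕ) + y2 ^ (8:ℕ) + y3 ^ (6:ℕ) + y4 ^ (4:ℕ) + y5 ^ (2:ℕ)) ^ ((1:ℝ)/10) := by
  have hSx : (0:ℝ) ≤ x1 ^ (10:ℕ) + x2 ^ (8:ℕ) + x3 ^ (6:ℕ) + x4 ^ (4:ℕ) + x5 ^ (2:ℕ) := by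
    positivity
  have hSy : (0:ℝ) ≤ y1 ^ (10:ℕ) + y2 ^ (8:ℕ) + y3 ^ (6:ℕ) + y4 ^ (4:ℕ) + y5 ^ (2:ℕ) := by
    positivity
  rcases eq_or_lt_of_le hSx with hx0 | hxpos
  · obtain ⟨h1, h2, h3, h4, h5⟩ := sum5_zero _ _ _ _ _ (by positivity) (by positivity)
      (by positivity) (by positivity) (by positivity) hx0.symm
    have e1 : x1 = 0 := pow_eq_zero_iff (by norm_num : (10:ℕ) ≠ 0) |>.mp h1
    have e2 : x2 = 0 := pow_eq_zero_iff (by norm_num : (8:ℕ) ≠ 0) |>.mp h2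
    have e3 : x3 = 0 := pow_eq_zero_iff (by norm_num : (6:ℕ) ≠ 0) |>.mp h3
    have e4 : x4 = 0 := pow_eq_zero_iff (by norm_num : (4:ℕ) ≠ 0) |>.mp h4
    have e5 : x5 = 0 := pow_eq_zero_iff (by norm_num : (2:ℕ) ≠ 0) |>.mp h5
    subst e1 e2 e3 e4 e5
    simp [Real.zero_rpow (by norm_num : (1:ℝ)/10 ≠ 0)]
  rcases eq_or_lt_of_le hSy with hy0 | hypos
  · obtain ⟨h1, h2, h3, h4, h5⟩ := sum5_zero _ _ _ _ _ (by positivity) (by positivity)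
      (by positivity) (by positivity) (by positivity) hy0.symm
    have e1 : y1 = 0 := pow_eq_zero_iff (by norm_num : (10:ℕ) ≠ 0) |>.mp h1
    have e2 : y2 = 0 := pow_eq_zero_iff (by norm_num : (8:ℕ) ≠ 0) |>.mp h2
    have e3 : y3 = 0 := pow_eq_zero_iff (by norm_num : (6:ℕ) ≠ 0) |>.mp h3
    have e4 : y4 = 0 := pow_eq_zero_iff (by norm_num : (4:ℕ) ≠ 0) |>.mp h4
    have e5 : y5 = 0 := pow_eq_zero_iff (by norm_num : (2:ℕ) ≠ 0) |>.mp h5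
    subst e1 e2 e3 e4 e5
    simp [Real.zero_rpow (by norm_num : (1:ℝ)/10 ≠ 0)]
  -- main case
  set Sx := x1 ^ (10:ℕ) + x2 ^ (8:ℕ) + x3 ^ (6:ℕ) + x4 ^ (4:ℕ) + x5 ^ (2:ℕ) with hSxdef
  set Sy := y1 ^ (10:ℕ) + y2 ^ (8:ℕ) + y3 ^ (6:ℕ) + y4 ^ (4:ℕ) + y5 ^ (2:ℕ) with hSydef
  set A := Sx ^ ((1:ℝ)/10) with hAdef
  set B := Sy ^ ((1:ℝ)/10) with hBdef
  have hA : 0 < A := Real.rpow_pos_of_pos hxpos _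
  have hB : 0 < B := Real.rpow_pos_of_pos hypos _
  have hAB : 0 < A + B := by linarith
  have hA10 : A ^ (10:ℕ) = Sx := by
    rw [hAdef, ← Real.rpow_natCast (Sx ^ ((1:ℝ)/10)) 10, ← Real.rpow_mul hSx]
    norm_num
  have hB10 : B ^ (10:ℕ) = Sy := by
    rw [hBdef, ← Real.rpow_natCast (Sy ^ ((1:ℝ)/10)) 10, ← Real.rpow_mul hSy]
    norm_num
  set l := A / (A + B) with hldef
  set m := B / (A + B) with hmdef
  have hl : 0 < l := by positivity
  have hm : 0 < m := by positivity
  have hlm : l + m = 1 := by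
    rw [hldef, hmdef]
    field_simp
  have t1 := conv_aux x1 y1 l m hx1 hy1 hl hm hlm 10 (by norm_num) (by norm_num)
  have t2 := conv_aux x2 y2 l m hx2 hy2 hl hm hlm 8 (by norm_num) (by norm_num)
  have t3 := conv_aux x3 y3 l m hx3 hy3 hl hm hlm 6 (by norm_num) (by norm_num)
  have t4 := conv_aux x4 y4 l m hx4 hy4 hl hm hlm 4 (by norm_num) (by norm_num)
  have t5 := conv_aux x5 y5 l m hx5 hy5 hl hm hlm 2 (by norm_num) (by norm_num)
  have hsum : (x1 + y1) ^ (10:ℕ) + (x2 + y2) ^ (8:ℕ) + (x3 + y3) ^ (6:ℕ) +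
      (x4 + y4) ^ (4:ℕ) + (x5 + y5) ^ (2:ℕ) ≤ Sx / l ^ 9 + Sy / m ^ 9 := by
    have ex : Sx / l ^ 9 = x1 ^ (10:ℕ) / l ^ 9 + x2 ^ (8:ℕ) / l ^ 9 + x3 ^ (6:ℕ) / l ^ 9 +
        x4 ^ (4:ℕ) / l ^ 9 + x5 ^ (2:ℕ) / l ^ 9 := by
      rw [hSxdef]; ring
    have ey : Sy / m ^ 9 = y1 ^ (10:ℕ) / m ^ 9 + y2 ^ (8:ℕ) / m ^ 9 + y3 ^ (6:ℕ) / m ^ 9 +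
        y4 ^ (4:ℕ) / m ^ 9 + y5 ^ (2:ℕ) / m ^ 9 := by
      rw [hSydef]; ring
    rw [ex, ey]
    linarith
  have heq : Sx / l ^ 9 + Sy / m ^ 9 = (A + B) ^ (10:ℕ) := by
    rw [← hA10, ← hB10, hldef, hmdef]
    rw [div_pow, div_pow, div_div_eq_mul_div, div_div_eq_mul_div]
    field_simp
  have hfinal : (x1 + y1) ^ (10:ℕ) + (x2 + y2) ^ (8:ℕ) + (x3 + y3) ^ (6:ℕ) +
      (x4 + y4) ^ (4:ℕ) + (x5 + y5) ^ (2:ℕ) ≤ (A + B) ^ (10:ℕ) := by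
    rw [← heq]; exact hsum
  calc ((x1 + y1) ^ (10:ℕ) + (x2 + y2) ^ (8:ℕ) + (x3 + y3) ^ (6:ℕ) + (x4 + y4) ^ (4:ℕ) +
      (x5 + y5) ^ (2:ℕ)) ^ ((1:ℝ)/10)
      ≤ ((A + B) ^ (10:ℕ)) ^ ((1:ℝ)/10) :=
        Real.rpow_le_rpow (by positivity) hfinal (by norm_num)
    _ = A + B := by
        rw [← Real.rpow_natCast (A + B) 10, ← Real.rpow_mul hAB.le]
        norm_num
end

section
/- For all nonnegative reals x1, x2, x3, x4, y1, y2, y3, y4: ((x1+y1)^8 + (x2+y2)^6 + (x3+y3)^4 + (x4+y4)^2)^{1/8} ≤ (x1^8+x2^6+x3^4+x4^2)^{1/8} + (y1^8+y2^6+y3^4+y4^2)^{1/8}. -/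
open Real Finset

lemma rpow_add_le_add_rpow' (x y p : ℝ) (hx : 0 ≤ x) (hy : 0 ≤ y) (hp : 0 ≤ p)
    (hp1 : p ≤ 1) : (x + y) ^ p ≤ x ^ p + y ^ p := by
  lift x to NNReal using hx
  lift y to NNReal using hy
  have := NNReal.rpow_add_le_add_rpow x y hp hp1
  exact_mod_cast this

lemma r8 (a : ℝ) : a ^ (8:ℝ) = a ^ (8:ℕ) := by rw [← Real.rpow_natCast a 8]; norm_num
lemma r6 (a : ℝ) : a ^ (6:ℝ) = a ^ (6:ℕ) := by rw [← Real.rpow_natCast a 6]; norm_num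
lemma r4 (a : ℝ) : a ^ (4:ℝ) = a ^ (4:ℕ) := by rw [← Real.rpow_natCast a 4]; norm_num
lemma r2 (a : ℝ) : a ^ (2:ℝ) = a ^ (2:ℕ) := by rw [← Real.rpow_natCast a 2]; norm_num

theorem stmt_8 (x1 x2 x3 x4 y1 y2 y3 y4 : ℝ)
    (hx1 : 0 ≤ x1) (hx2 : 0 ≤ x2) (hx3 : 0 ≤ x3) (hx4 : 0 ≤ x4)
    (hy1 : 0 ≤ y1) (hy2 : 0 ≤ y2) (hy3 : 0 ≤ y3) (hy4 : 0 ≤ y4) :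
    ((x1 + y1) ^ (8:ℕ) + (x2 + y2) ^ (6:ℕ) + (x3 + y3) ^ (4:ℕ) + (x4 + y4) ^ (2:ℕ)) ^ ((1:ℝ)/8) ≤
    (x1 ^ (8:ℕ) + x2 ^ (6:ℕ) + x3 ^ (4:ℕ) + x4 ^ (2:ℕ)) ^ ((1:ℝ)/8) +
    (y1 ^ (8:ℕ) + y2 ^ (6:ℕ) + y3 ^ (4:ℕ) + y4 ^ (2:ℕ)) ^ ((1:ℝ)/8) := by
  set f : Fin 4 → ℝ := ![x1, x2 ^ ((3:ℝ)/4), x3 ^ ((1:ℝ)/2), x4 ^ ((1:ℝ)/4)] with hf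
  set g : Fin 4 → ℝ := ![y1, y2 ^ ((3:ℝ)/4), y3 ^ ((1:ℝ)/2), y4 ^ ((1:ℝ)/4)] with hg
  have key := Real.Lp_add_le (univ : Finset (Fin 4)) f g (p := 8) (by norm_num)
  have hfx : ∀ i, 0 ≤ f i := by
    intro i; fin_cases i <;> simp [hf] <;> positivity
  have hgx : ∀ i, 0 ≤ g i := by
    intro i; fin_cases i <;> simp [hg] <;> positivity
  -- rewrite RHS sums
  have hsumf : ∑ i, |f i| ^ (8:ℝ) = x1 ^ (8:ℕ) + x2 ^ (6:ℕ) + x3 ^ (4:ℕ) + x4 ^ (2:ℕ) := by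
    rw [Fin.sum_univ_four]
    simp only [hf, Matrix.cons_val_zero, Matrix.cons_val_one, Matrix.head_cons,
      Matrix.cons_val_two, Matrix.tail_cons, Matrix.cons_val_three]
    rw [abs_of_nonneg hx1, abs_of_nonneg (by positivity), abs_of_nonneg (by positivity),
      abs_of_nonneg (by positivity),
      ← Real.rpow_natCast x1 8, ← Real.rpow_mul hx2, ← Real.rpow_mul hx3, ← Real.rpow_mul hx4]
    norm_num [r8, r6, r4, r2]
  have hsumg : ∑ i, |g i| ^ (8:ℝ) = y1 ^ (8:ℕ) + y2 ^ (6:ℕ) + y3 ^ (4:ℕ) + y4 ^ (2:ℕ) := by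
    rw [Fin.sum_univ_four]
    simp only [hg, Matrix.cons_val_zero, Matrix.cons_val_one, Matrix.head_cons,
      Matrix.cons_val_two, Matrix.tail_cons, Matrix.cons_val_three]
    rw [abs_of_nonneg hy1, abs_of_nonneg (by positivity), abs_of_nonneg (by positivity),
      abs_of_nonneg (by positivity),
      ← Real.rpow_natCast y1 8, ← Real.rpow_mul hy2, ← Real.rpow_mul hy3, ← Real.rpow_mul hy4]
    norm_num [r8, r6, r4, r2]
  rw [hsumf, hsumg] at key
  refine le_trans ?_ key
  apply Real.rpow_le_rpow (by positivity)
  · rw [Fin.sum_univ_four]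
    simp only [hf, hg, Matrix.cons_val_zero, Matrix.cons_val_one, Matrix.head_cons,
      Matrix.cons_val_two, Matrix.tail_cons, Matrix.cons_val_three]
    have habs : ∀ a b : ℝ, 0 ≤ a → 0 ≤ b → |a + b| = a + b := fun a b ha hb =>
      abs_of_nonneg (by linarith)
    rw [habs _ _ hx1 hy1, habs _ _ (by positivity) (by positivity),
      habs _ _ (by positivity) (by positivity), habs _ _ (by positivity) (by positivity)]
    have step : ∀ x y : ℝ, 0 ≤ x → 0 ≤ y → ∀ q : ℝ, 0 ≤ q → q ≤ 1 →
        ((x + y) ^ (q * 8)) ≤ (x ^ q + y ^ q) ^ (8:ℝ) := by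
      intro x y hx hy q hq hq1
      rw [Real.rpow_mul (by linarith)]
      exact Real.rpow_le_rpow (by positivity)
        (rpow_add_le_add_rpow' x y q hx hy hq hq1) (by norm_num)
    have h2 := step x2 y2 hx2 hy2 ((3:ℝ)/4) (by norm_num) (by norm_num)
    have h3 := step x3 y3 hx3 hy3 ((1:ℝ)/2) (by norm_num) (by norm_num)
    have h4 := step x4 y4 hx4 hy4 ((1:ℝ)/4) (by norm_num) (by norm_num)
    norm_num [r8, r6, r4, r2] at h2 h3 h4
    simp only [r8, r6, r4, r2]
    linarith
  · norm_num
end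

section
/- For all nonnegative reals x1, x2, x3, y1, y2, y3: ((x1+y1)^6 + (x2+y2)^4 + (x3+y3)^2)^{1/6} ≤ (x1^6+x2^4+x3^2)^{1/6} + (y1^6+y2^4+y3^2)^{1/6}. -/
lemma radon_aux (k : ℕ) {x y a b : ℝ} (hx : 0 ≤ x) (hy : 0 ≤ y) (ha : 0 < a) (hb : 0 < b) :
    (x + y) ^ (k+1) ≤ (a + b) ^ k * (x ^ (k+1) / a ^ k + y ^ (k+1) / b ^ k) := by
  have hab : 0 < a + b := by linarith
  have key := (convexOn_pow (k+1)).2 (Set.mem_Ici.mpr (div_nonneg hx ha.le))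
    (Set.mem_Ici.mpr (div_nonneg hy hb.le))
    (by positivity : (0:ℝ) ≤ a/(a+b)) (by positivity : (0:ℝ) ≤ b/(a+b))
    (by field_simp)
  simp only [smul_eq_mul] at key
  have h1 : a/(a+b) * (x/a) + b/(a+b) * (y/b) = (x+y)/(a+b) := by field_simp
  rw [h1] at key
  have h2 := mul_le_mul_of_nonneg_left key (le_of_lt (pow_pos hab (k+1)))
  calc (x + y) ^ (k+1) = (a+b)^(k+1) * ((x+y)/(a+b))^(k+1) := by
        rw [div_pow]; field_simp
    _ ≤ (a+b)^(k+1) * (a/(a+b) * (x/a)^(k+1) + b/(a+b) * (y/b)^(k+1)) := h2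
    _ = (a + b) ^ k * (x ^ (k+1) / a ^ k + y ^ (k+1) / b ^ k) := by
        rw [div_pow, div_pow]; field_simp; ring

lemma radon_aux' (k m : ℕ) (hkm : k ≤ m) {x y a b : ℝ} (hx : 0 ≤ x) (hy : 0 ≤ y)
    (ha : 0 < a) (hb : 0 < b) :
    (x + y) ^ (k+1) ≤ (a + b) ^ m * (x ^ (k+1) / a ^ m + y ^ (k+1) / b ^ m) := by
  refine (radon_aux k hx hy ha hb).trans ?_
  have hab : 0 < a + b := by linarith
  have bump : ∀ c : ℝ, 0 < c → c ≤ a + b → (a+b)^k / c^k ≤ (a+b)^m / c^m := by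
    intro c hc hcab
    rw [← div_pow, ← div_pow]
    exact pow_le_pow_right₀ ((one_le_div hc).mpr hcab) hkm
  have h1 := bump a ha (by linarith)
  have h2 := bump b hb (by linarith)
  have e1 : (a+b)^k * (x^(k+1)/a^k) ≤ (a+b)^m * (x^(k+1)/a^m) := by
    have := mul_le_mul_of_nonneg_left h1 (pow_nonneg hx (k+1))
    calc (a+b)^k * (x^(k+1)/a^k) = x^(k+1) * ((a+b)^k / a^k) := by ring
      _ ≤ x^(k+1) * ((a+b)^m / a^m) := this
      _ = (a+b)^m * (x^(k+1)/a^m) := by ring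
  have e2 : (a+b)^k * (y^(k+1)/b^k) ≤ (a+b)^m * (y^(k+1)/b^m) := by
    have := mul_le_mul_of_nonneg_left h2 (pow_nonneg hy (k+1))
    calc (a+b)^k * (y^(k+1)/b^k) = y^(k+1) * ((a+b)^k / b^k) := by ring
      _ ≤ y^(k+1) * ((a+b)^m / b^m) := this
      _ = (a+b)^m * (y^(k+1)/b^m) := by ring
  calc (a+b)^k * (x^(k+1)/a^k + y^(k+1)/b^k)
      = (a+b)^k * (x^(k+1)/a^k) + (a+b)^k * (y^(k+1)/b^k) := by ring
    _ ≤ (a+b)^m * (x^(k+1)/a^m) + (a+b)^m * (y^(k+1)/b^m) := add_le_add e1 e2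
    _ = (a + b) ^ m * (x ^ (k+1) / a ^ m + y ^ (k+1) / b ^ m) := by ring

theorem stmt_9 (x1 x2 x3 y1 y2 y3 : ℝ)
    (hx1 : 0 ≤ x1) (hx2 : 0 ≤ x2) (hx3 : 0 ≤ x3)
    (hy1 : 0 ≤ y1) (hy2 : 0 ≤ y2) (hy3 : 0 ≤ y3) :
    ((x1 + y1) ^ (6:ℕ) + (x2 + y2) ^ (4:ℕ) + (x3 + y3) ^ (2:ℕ)) ^ ((1:ℝ)/6) ≤
    (x1 ^ (6:ℕ) + x2 ^ (4:ℕ) + x3 ^ (2:ℕ)) ^ ((1:ℝ)/6) +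
    (y1 ^ (6:ℕ) + y2 ^ (4:ℕ) + y3 ^ (2:ℕ)) ^ ((1:ℝ)/6) := by
  set A : ℝ := x1 ^ (6:ℕ) + x2 ^ (4:ℕ) + x3 ^ (2:ℕ) with hA
  set B : ℝ := y1 ^ (6:ℕ) + y2 ^ (4:ℕ) + y3 ^ (2:ℕ) with hB
  have hA0 : 0 ≤ A := by positivity
  have hB0 : 0 ≤ B := by positivity
  rcases eq_or_lt_of_le hA0 with hAz | hApos
  · have h1 : x1 = 0 := by nlinarith [pow_nonneg hx1 6, pow_nonneg hx2 4, pow_nonneg hx3 2, pow_eq_zero_iff (n := 6) (by norm_num) |>.mp (le_antisymm (by nlinarith [pow_nonneg hx2 4, pow_nonneg hx3 2]) (pow_nonneg hx1 6))]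
    have h2 : x2 = 0 := by nlinarith [pow_eq_zero_iff (n := 4) (by norm_num) |>.mp (le_antisymm (by nlinarith [pow_nonneg hx1 6, pow_nonneg hx3 2]) (pow_nonneg hx2 4))]
    have h3 : x3 = 0 := by nlinarith [pow_eq_zero_iff (n := 2) (by norm_num) |>.mp (le_antisymm (by nlinarith [pow_nonneg hx1 6, pow_nonneg hx2 4]) (pow_nonneg hx3 2))]
    rw [← hAz]
    simp [h1, h2, h3, Real.zero_rpow (by norm_num : (1:ℝ)/6 ≠ 0)]
    exact le_of_eq (by rw [hB])
  rcases eq_or_lt_of_le hB0 with hBz | hBpos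
  · have h1 : y1 = 0 := by nlinarith [pow_eq_zero_iff (n := 6) (by norm_num) |>.mp (le_antisymm (by nlinarith [pow_nonneg hy2 4, pow_nonneg hy3 2]) (pow_nonneg hy1 6))]
    have h2 : y2 = 0 := by nlinarith [pow_eq_zero_iff (n := 4) (by norm_num) |>.mp (le_antisymm (by nlinarith [pow_nonneg hy1 6, pow_nonneg hy3 2]) (pow_nonneg hy2 4))]
    have h3 : y3 = 0 := by nlinarith [pow_eq_zero_iff (n := 2) (by norm_num) |>.mp (le_antisymm (by nlinarith [pow_nonneg hy1 6, pow_nonneg hy2 4]) (pow_nonneg hy3 2))]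
    rw [← hBz]
    simp [h1, h2, h3, Real.zero_rpow (by norm_num : (1:ℝ)/6 ≠ 0)]
    exact le_of_eq (by rw [hA])
  set a : ℝ := A ^ ((1:ℝ)/6) with ha_def
  set b : ℝ := B ^ ((1:ℝ)/6) with hb_def
  have ha : 0 < a := Real.rpow_pos_of_pos hApos _
  have hb : 0 < b := Real.rpow_pos_of_pos hBpos _
  have ha6 : a ^ (6:ℕ) = A := by
    rw [ha_def, ← Real.rpow_natCast (A ^ ((1:ℝ)/6)) 6, ← Real.rpow_mul hA0]
    norm_num
  have hb6 : b ^ (6:ℕ) = B := by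
    rw [hb_def, ← Real.rpow_natCast (B ^ ((1:ℝ)/6)) 6, ← Real.rpow_mul hB0]
    norm_num
  have h6 := radon_aux' 5 5 le_rfl hx1 hy1 ha hb
  have h4 := radon_aux' 3 5 (by norm_num) hx2 hy2 ha hb
  have h2 := radon_aux' 1 5 (by norm_num) hx3 hy3 ha hb
  norm_num at h6 h4 h2
  have hsum : (x1 + y1) ^ (6:ℕ) + (x2 + y2) ^ (4:ℕ) + (x3 + y3) ^ (2:ℕ) ≤ (a + b) ^ (6:ℕ) := by
    have heq : (a+b)^5 * (x1^6/a^5 + y1^6/b^5) + (a+b)^5 * (x2^4/a^5 + y2^4/b^5)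
        + (a+b)^5 * (x3^2/a^5 + y3^2/b^5) = (a+b)^(6:ℕ) := by
      have hA' : (x1^6 + x2^4 + x3^2) = a^6 := by rw [ha6]
      have hB' : (y1^6 + y2^4 + y3^2) = b^6 := by rw [hb6]
      calc (a+b)^5 * (x1^6/a^5 + y1^6/b^5) + (a+b)^5 * (x2^4/a^5 + y2^4/b^5)
          + (a+b)^5 * (x3^2/a^5 + y3^2/b^5)
          = (a+b)^5 * ((x1^6 + x2^4 + x3^2)/a^5 + (y1^6 + y2^4 + y3^2)/b^5) := by ring
        _ = (a+b)^5 * (a^6/a^5 + b^6/b^5) := by rw [hA', hB']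
        _ = (a+b)^(6:ℕ) := by field_simp
    linarith [h6, h4, h2]
  have hfin := Real.rpow_le_rpow (by positivity) hsum (by norm_num : (0:ℝ) ≤ 1/6)
  have hab6 : ((a + b) ^ (6:ℕ) : ℝ) ^ ((1:ℝ)/6) = a + b := by
    rw [← Real.rpow_natCast (a+b) 6, ← Real.rpow_mul (by positivity)]
    norm_num
  rw [hab6] at hfin
  exact hfin
end

section
/- Let V1,...,V5 be real inner product spaces. For X = (v1,...,v5) in V1 × ⋯ × V5 define ‖X‖ = (‖v1‖^{10} + ‖v2‖^8 + ‖v3‖^6 + ‖v4‖^4 + ‖v5‖^2)^{1/10}. Then ‖X + Y‖ ≤ ‖X‖ + ‖Y‖ for all X, Y in V1 × ⋯ × V5. -/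
open Real Finset

lemma aux_rpow_subadd {a b : ℝ} (t : ℝ) (ha : 0 ≤ a) (hb : 0 ≤ b) (ht0 : 0 ≤ t) (ht1 : t ≤ 1) :
    (a + b) ^ t ≤ a ^ t + b ^ t := by
  lift a to NNReal using ha
  lift b to NNReal using hb
  have := NNReal.rpow_add_le_add_rpow a b ht0 ht1
  exact_mod_cast this

theorem stmt_10
    (V1 V2 V3 V4 V5 : Type*)
    [NormedAddCommGroup V1] [InnerProductSpace ℝ V1]
    [NormedAddCommGroup V2] [InnerProductSpace ℝ V2]
    [NormedAddCommGroup V3] [InnerProductSpace ℝ V3]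
    [NormedAddCommGroup V4] [InnerProductSpace ℝ V4]
    [NormedAddCommGroup V5] [InnerProductSpace ℝ V5]
    (X Y : V1 × V2 × V3 × V4 × V5) :
    (‖(X + Y).1‖ ^ (10:ℕ) + ‖(X + Y).2.1‖ ^ (8:ℕ) + ‖(X + Y).2.2.1‖ ^ (6:ℕ) +
      ‖(X + Y).2.2.2.1‖ ^ (4:ℕ) + ‖(X + Y).2.2.2.2‖ ^ (2:ℕ)) ^ ((1:ℝ)/10) ≤
    (‖X.1‖ ^ (10:ℕ) + ‖X.2.1‖ ^ (8:ℕ) + ‖X.2.2.1‖ ^ (6:ℕ) + ‖X.2.2.2.1‖ ^ (4:ℕ) +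
      ‖X.2.2.2.2‖ ^ (2:ℕ)) ^ ((1:ℝ)/10) +
    (‖Y.1‖ ^ (10:ℕ) + ‖Y.2.1‖ ^ (8:ℕ) + ‖Y.2.2.1‖ ^ (6:ℕ) + ‖Y.2.2.2.1‖ ^ (4:ℕ) +
      ‖Y.2.2.2.2‖ ^ (2:ℕ)) ^ ((1:ℝ)/10) := by
  set a1 := ‖X.1‖; set a2 := ‖X.2.1‖; set a3 := ‖X.2.2.1‖; set a4 := ‖X.2.2.2.1‖
  set a5 := ‖X.2.2.2.2‖
  set b1 := ‖Y.1‖; set b2 := ‖Y.2.1‖; set b3 := ‖Y.2.2.1‖; set b4 := ‖Y.2.2.2.1‖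
  set b5 := ‖Y.2.2.2.2‖
  have ha1 : (0:ℝ) ≤ a1 := norm_nonneg _
  have ha2 : (0:ℝ) ≤ a2 := norm_nonneg _
  have ha3 : (0:ℝ) ≤ a3 := norm_nonneg _
  have ha4 : (0:ℝ) ≤ a4 := norm_nonneg _
  have ha5 : (0:ℝ) ≤ a5 := norm_nonneg _
  have hb1 : (0:ℝ) ≤ b1 := norm_nonneg _
  have hb2 : (0:ℝ) ≤ b2 := norm_nonneg _
  have hb3 : (0:ℝ) ≤ b3 := norm_nonneg _
  have hb4 : (0:ℝ) ≤ b4 := norm_nonneg _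
  have hb5 : (0:ℝ) ≤ b5 := norm_nonneg _
  set f : Fin 5 → ℝ := ![a1, a2 ^ ((4:ℝ)/5), a3 ^ ((3:ℝ)/5), a4 ^ ((2:ℝ)/5), a5 ^ ((1:ℝ)/5)]
  set g : Fin 5 → ℝ := ![b1, b2 ^ ((4:ℝ)/5), b3 ^ ((3:ℝ)/5), b4 ^ ((2:ℝ)/5), b5 ^ ((1:ℝ)/5)]
  have hf : ∀ i ∈ Finset.univ, (0:ℝ) ≤ f i := by
    intro i _; fin_cases i <;> simp [f] <;> positivity
  have hg : ∀ i ∈ Finset.univ, (0:ℝ) ≤ g i := by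
    intro i _; fin_cases i <;> simp [g] <;> positivity
  have mink := Real.Lp_add_le_of_nonneg (s := Finset.univ) (f := f) (g := g) (p := 10) (by norm_num) hf hg
  rw [Fin.sum_univ_five, Fin.sum_univ_five, Fin.sum_univ_five] at mink
  simp only [f, g, Matrix.cons_val_zero, Matrix.cons_val_one, Matrix.head_cons,
    Matrix.cons_val_two, Matrix.tail_cons, Matrix.cons_val_three, Matrix.cons_val_four] at mink
  -- key pointwise bounds for the middle sums
  have pow_eq : ∀ (a t : ℝ), 0 ≤ a → (a ^ t) ^ (10:ℝ) = a ^ (10 * t) := by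
    intro a t ha
    rw [← Real.rpow_mul ha]
    ring_nf
  -- rewrite RHS of mink
  have ea1 : ∀ a : ℝ, a ^ (10:ℝ) = a ^ (10:ℕ) := by
    intro a; rw [← Real.rpow_natCast a 10]; norm_num
  have e2 : ∀ (a : ℝ), 0 ≤ a → (a ^ ((4:ℝ)/5)) ^ (10:ℝ) = a ^ (8:ℕ) := by
    intro a ha; rw [pow_eq a _ ha, ← Real.rpow_natCast a 8]; norm_num
  have e3 : ∀ (a : ℝ), 0 ≤ a → (a ^ ((3:ℝ)/5)) ^ (10:ℝ) = a ^ (6:ℕ) := by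
    intro a ha; rw [pow_eq a _ ha, ← Real.rpow_natCast a 6]; norm_num
  have e4 : ∀ (a : ℝ), 0 ≤ a → (a ^ ((2:ℝ)/5)) ^ (10:ℝ) = a ^ (4:ℕ) := by
    intro a ha; rw [pow_eq a _ ha, ← Real.rpow_natCast a 4]; norm_num
  have e5 : ∀ (a : ℝ), 0 ≤ a → (a ^ ((1:ℝ)/5)) ^ (10:ℝ) = a ^ (2:ℕ) := by
    intro a ha; rw [pow_eq a _ ha, ← Real.rpow_natCast a 2]; norm_num
  rw [ea1 a1, e2 a2 ha2, e3 a3 ha3, e4 a4 ha4, e5 a5 ha5,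
    ea1 b1,
    e2 b2 hb2, e3 b3 hb3, e4 b4 hb4, e5 b5 hb5] at mink
  refine le_trans ?_ mink
  apply Real.rpow_le_rpow (by positivity) ?_ (by norm_num)
  have hc1 : ‖(X + Y).1‖ ≤ a1 + b1 := norm_add_le _ _
  have hc2 : ‖(X + Y).2.1‖ ≤ a2 + b2 := norm_add_le _ _
  have hc3 : ‖(X + Y).2.2.1‖ ≤ a3 + b3 := norm_add_le _ _
  have hc4 : ‖(X + Y).2.2.2.1‖ ≤ a4 + b4 := norm_add_le _ _
  have hc5 : ‖(X + Y).2.2.2.2‖ ≤ a5 + b5 := norm_add_le _ _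
  have key : ∀ (c a b t : ℝ), 0 ≤ c → 0 ≤ a → 0 ≤ b → 0 ≤ t → t ≤ 1 → c ≤ a + b →
      (c ^ t) ^ (10:ℝ) ≤ (a ^ t + b ^ t) ^ (10:ℝ) := by
    intro c a b t hc0 ha hb ht0 ht1 hc
    apply Real.rpow_le_rpow (by positivity)
    · exact le_trans (Real.rpow_le_rpow hc0 hc ht0) (aux_rpow_subadd t ha hb ht0 ht1)
    · norm_num
  have hc10 : (0:ℝ) ≤ ‖(X + Y).1‖ := norm_nonneg _
  have hc20 : (0:ℝ) ≤ ‖(X + Y).2.1‖ := norm_nonneg _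
  have hc30 : (0:ℝ) ≤ ‖(X + Y).2.2.1‖ := norm_nonneg _
  have hc40 : (0:ℝ) ≤ ‖(X + Y).2.2.2.1‖ := norm_nonneg _
  have hc50 : (0:ℝ) ≤ ‖(X + Y).2.2.2.2‖ := norm_nonneg _
  have t1 : ‖(X + Y).1‖ ^ (10:ℕ) ≤ (a1 + b1) ^ (10:ℝ) := by
    rw [ea1 (a1 + b1)]
    exact pow_le_pow_left₀ hc10 hc1 10
  have t2 : ‖(X + Y).2.1‖ ^ (8:ℕ) ≤ (a2 ^ ((4:ℝ)/5) + b2 ^ ((4:ℝ)/5)) ^ (10:ℝ) := by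
    rw [← e2 _ hc20]
    exact key _ _ _ _ hc20 ha2 hb2 (by norm_num) (by norm_num) hc2
  have t3 : ‖(X + Y).2.2.1‖ ^ (6:ℕ) ≤ (a3 ^ ((3:ℝ)/5) + b3 ^ ((3:ℝ)/5)) ^ (10:ℝ) := by
    rw [← e3 _ hc30]
    exact key _ _ _ _ hc30 ha3 hb3 (by norm_num) (by norm_num) hc3
  have t4 : ‖(X + Y).2.2.2.1‖ ^ (4:ℕ) ≤ (a4 ^ ((2:ℝ)/5) + b4 ^ ((2:ℝ)/5)) ^ (10:ℝ) := by
    rw [← e4 _ hc40]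
    exact key _ _ _ _ hc40 ha4 hb4 (by norm_num) (by norm_num) hc4
  have t5 : ‖(X + Y).2.2.2.2‖ ^ (2:ℕ) ≤ (a5 ^ ((1:ℝ)/5) + b5 ^ ((1:ℝ)/5)) ^ (10:ℝ) := by
    rw [← e5 _ hc50]
    exact key _ _ _ _ hc50 ha5 hb5 (by norm_num) (by norm_num) hc5
  linarith [t1, t2, t3, t4, t5]
end

section
/- Let V1, V2, V3 be real inner product spaces. Define ‖(v1,v2,v3)‖ = (‖v1‖^6 + ‖v2‖^4 + ‖v3‖^2)^{1/6}. Then this function satisfies the triangle inequality on V1 × V2 × V3. -/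
open Real

/-- Casting rpow with literal exponents to nat powers. -/
lemma rp2 (x : ℝ) : x ^ ((2:ℝ)) = x ^ (2:ℕ) := by
  rw [show ((2:ℝ)) = ((2:ℕ):ℝ) by norm_num, Real.rpow_natCast]
lemma rp4 (x : ℝ) : x ^ ((4:ℝ)) = x ^ (4:ℕ) := by
  rw [show ((4:ℝ)) = ((4:ℕ):ℝ) by norm_num, Real.rpow_natCast]
lemma rp6 (x : ℝ) : x ^ ((6:ℝ)) = x ^ (6:ℕ) := by
  rw [show ((6:ℝ)) = ((6:ℕ):ℝ) by norm_num, Real.rpow_natCast]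

/-- Two-element Minkowski inequality for nonnegative reals. -/
lemma mink2 {p x y x' y' : ℝ} (hp : 1 ≤ p) (hx : 0 ≤ x) (hy : 0 ≤ y)
    (hx' : 0 ≤ x') (hy' : 0 ≤ y') :
    ((x + x') ^ p + (y + y') ^ p) ^ (1 / p) ≤
      (x ^ p + y ^ p) ^ (1 / p) + (x' ^ p + y' ^ p) ^ (1 / p) := by
  have := Real.Lp_add_le_of_nonneg (s := (Finset.univ : Finset (Fin 2)))
    (f := ![x, y]) (g := ![x', y']) hp
    (by intro i _; fin_cases i <;> assumption)
    (by intro i _; fin_cases i <;> assumption)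
  simpa [Fin.sum_univ_two] using this

/-- rpow subadditivity for exponents in [0,1], real version. -/
lemma rpow_subadd {p u v : ℝ} (hu : 0 ≤ u) (hv : 0 ≤ v) (hp0 : 0 ≤ p) (hp1 : p ≤ 1) :
    (u + v) ^ p ≤ u ^ p + v ^ p := by
  lift u to NNReal using hu
  lift v to NNReal using hv
  have := NNReal.rpow_add_le_add_rpow u v hp0 hp1
  exact_mod_cast this

/-- sqrt is subadditive. -/
lemma sqrt_subadd {c c' : ℝ} (hc : 0 ≤ c) (hc' : 0 ≤ c') :
    Real.sqrt (c + c') ≤ Real.sqrt c + Real.sqrt c' := by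
  have h : c + c' ≤ (Real.sqrt c + Real.sqrt c') ^ 2 := by
    nlinarith [Real.sq_sqrt hc, Real.sq_sqrt hc', Real.sqrt_nonneg c, Real.sqrt_nonneg c']
  calc Real.sqrt (c + c') ≤ Real.sqrt ((Real.sqrt c + Real.sqrt c') ^ 2) :=
        Real.sqrt_le_sqrt h
    _ = Real.sqrt c + Real.sqrt c' :=
        Real.sqrt_sq (by positivity)

lemma key {a b c a' b' c' : ℝ} (ha : 0 ≤ a) (hb : 0 ≤ b) (hc : 0 ≤ c)
    (ha' : 0 ≤ a') (hb' : 0 ≤ b') (hc' : 0 ≤ c') :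
    ((a + a') ^ (6:ℕ) + ((b + b') ^ (4:ℕ) + (c + c') ^ (2:ℕ))) ^ ((1:ℝ)/6) ≤
      (a ^ (6:ℕ) + (b ^ (4:ℕ) + c ^ (2:ℕ))) ^ ((1:ℝ)/6) +
      (a' ^ (6:ℕ) + (b' ^ (4:ℕ) + c' ^ (2:ℕ))) ^ ((1:ℝ)/6) := by
  have hbc : (0:ℝ) ≤ b ^ (4:ℕ) + c ^ (2:ℕ) := by positivity
  have hbc' : (0:ℝ) ≤ b' ^ (4:ℕ) + c' ^ (2:ℕ) := by positivity
  set M : ℝ := (b ^ (4:ℕ) + c ^ (2:ℕ)) ^ ((1:ℝ)/6) with hM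
  set M' : ℝ := (b' ^ (4:ℕ) + c' ^ (2:ℕ)) ^ ((1:ℝ)/6) with hM'
  have hMnn : 0 ≤ M := Real.rpow_nonneg hbc _
  have hM'nn : 0 ≤ M' := Real.rpow_nonneg hbc' _
  have hM6 : M ^ ((6:ℝ)) = b ^ (4:ℕ) + c ^ (2:ℕ) := by
    rw [hM, ← Real.rpow_mul hbc]; norm_num
  have hM'6 : M' ^ ((6:ℝ)) = b' ^ (4:ℕ) + c' ^ (2:ℕ) := by
    rw [hM', ← Real.rpow_mul hbc']; norm_num
  -- Step 1: ((b+b')^4 + (c+c')^2)^(1/6) ≤ M + M'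
  have step1 : ((b + b') ^ (4:ℕ) + (c + c') ^ (2:ℕ)) ^ ((1:ℝ)/6) ≤ M + M' := by
    set K : ℝ := (b ^ (4:ℕ) + c ^ (2:ℕ)) ^ ((1:ℝ)/4) with hK
    set K' : ℝ := (b' ^ (4:ℕ) + c' ^ (2:ℕ)) ^ ((1:ℝ)/4) with hK'
    have hKnn : 0 ≤ K := Real.rpow_nonneg hbc _
    have hK'nn : 0 ≤ K' := Real.rpow_nonneg hbc' _
    have hsqrt : Real.sqrt (c + c') ≤ Real.sqrt c + Real.sqrt c' := sqrt_subadd hc hc'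
    have hcc : (c + c') ^ (2:ℕ) ≤ (Real.sqrt c + Real.sqrt c') ^ (4:ℕ) := by
      have h1 : (c + c') ^ (2:ℕ) = (Real.sqrt (c + c')) ^ (4:ℕ) := by
        rw [show (4:ℕ) = 2 * 2 from rfl, pow_mul, Real.sq_sqrt (by linarith)]
      rw [h1]
      exact pow_le_pow_left₀ (Real.sqrt_nonneg _) hsqrt 4
    have hmink : ((b + b') ^ ((4:ℝ)) + (Real.sqrt c + Real.sqrt c') ^ ((4:ℝ))) ^ ((1:ℝ)/4) ≤
        K + K' := by
      have h := mink2 (p := 4) (by norm_num) hb (Real.sqrt_nonneg c) hb' (Real.sqrt_nonneg c')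
      have e1 : (Real.sqrt c) ^ ((4:ℝ)) = c ^ (2:ℕ) := by
        rw [rp4, show (4:ℕ) = 2 * 2 from rfl, pow_mul, Real.sq_sqrt hc]
      have e2 : (Real.sqrt c') ^ ((4:ℝ)) = c' ^ (2:ℕ) := by
        rw [rp4, show (4:ℕ) = 2 * 2 from rfl, pow_mul, Real.sq_sqrt hc']
      rw [e1, e2, rp4 b, rp4 b'] at h
      rw [hK, hK']
      exact h
    have hS : (0:ℝ) ≤ (b + b') ^ (4:ℕ) + (c + c') ^ (2:ℕ) := by positivity
    have hstep : ((b + b') ^ (4:ℕ) + (c + c') ^ (2:ℕ)) ^ ((1:ℝ)/4) ≤ K + K' := by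
      calc ((b + b') ^ (4:ℕ) + (c + c') ^ (2:ℕ)) ^ ((1:ℝ)/4)
          ≤ ((b + b') ^ (4:ℕ) + (Real.sqrt c + Real.sqrt c') ^ (4:ℕ)) ^ ((1:ℝ)/4) := by
            apply Real.rpow_le_rpow hS (by linarith) (by norm_num)
        _ ≤ K + K' := by rw [← rp4, ← rp4]; exact hmink
    have h23 : ((b + b') ^ (4:ℕ) + (c + c') ^ (2:ℕ)) ^ ((1:ℝ)/6) =
        (((b + b') ^ (4:ℕ) + (c + c') ^ (2:ℕ)) ^ ((1:ℝ)/4)) ^ ((2:ℝ)/3) := by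
      rw [← Real.rpow_mul hS]; norm_num
    have hKM : K ^ ((2:ℝ)/3) = M := by
      rw [hK, hM, ← Real.rpow_mul hbc]; norm_num
    have hK'M : K' ^ ((2:ℝ)/3) = M' := by
      rw [hK', hM', ← Real.rpow_mul hbc']; norm_num
    calc ((b + b') ^ (4:ℕ) + (c + c') ^ (2:ℕ)) ^ ((1:ℝ)/6)
        = (((b + b') ^ (4:ℕ) + (c + c') ^ (2:ℕ)) ^ ((1:ℝ)/4)) ^ ((2:ℝ)/3) := h23
      _ ≤ (K + K') ^ ((2:ℝ)/3) := by
          apply Real.rpow_le_rpow (Real.rpow_nonneg hS _) hstep (by norm_num)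
      _ ≤ K ^ ((2:ℝ)/3) + K' ^ ((2:ℝ)/3) := rpow_subadd hKnn hK'nn (by norm_num) (by norm_num)
      _ = M + M' := by rw [hKM, hK'M]
  -- Step 2: main
  have hSle : (b + b') ^ (4:ℕ) + (c + c') ^ (2:ℕ) ≤ (M + M') ^ ((6:ℝ)) := by
    have hS : (0:ℝ) ≤ (b + b') ^ (4:ℕ) + (c + c') ^ (2:ℕ) := by positivity
    have := Real.rpow_le_rpow (Real.rpow_nonneg hS _) step1 (le_of_lt (by norm_num : (0:ℝ) < 6))
    rwa [← Real.rpow_mul hS, show ((1:ℝ)/6) * 6 = 1 by norm_num, Real.rpow_one] at this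
  have hmink6 : ((a + a') ^ ((6:ℝ)) + (M + M') ^ ((6:ℝ))) ^ ((1:ℝ)/6) ≤
      (a ^ ((6:ℝ)) + M ^ ((6:ℝ))) ^ ((1:ℝ)/6) + (a' ^ ((6:ℝ)) + M' ^ ((6:ℝ))) ^ ((1:ℝ)/6) :=
    mink2 (p := 6) (by norm_num) ha hMnn ha' hM'nn
  rw [hM6, hM'6, rp6 a, rp6 a'] at hmink6
  calc ((a + a') ^ (6:ℕ) + ((b + b') ^ (4:ℕ) + (c + c') ^ (2:ℕ))) ^ ((1:ℝ)/6)
      ≤ ((a + a') ^ ((6:ℝ)) + (M + M') ^ ((6:ℝ))) ^ ((1:ℝ)/6) := by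
        apply Real.rpow_le_rpow (by positivity) _ (by norm_num)
        rw [rp6]
        linarith
    _ ≤ (a ^ (6:ℕ) + (b ^ (4:ℕ) + c ^ (2:ℕ))) ^ ((1:ℝ)/6) +
        (a' ^ (6:ℕ) + (b' ^ (4:ℕ) + c' ^ (2:ℕ))) ^ ((1:ℝ)/6) := hmink6

theorem stmt_11
    (V1 V2 V3 : Type*)
    [NormedAddCommGroup V1] [InnerProductSpace ℝ V1]
    [NormedAddCommGroup V2] [InnerProductSpace ℝ V2]
    [NormedAddCommGroup V3] [InnerProductSpace ℝ V3]
    (X Y : V1 × V2 × V3) :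
    (‖(X + Y).1‖ ^ (6:ℕ) + ‖(X + Y).2.1‖ ^ (4:ℕ) + ‖(X + Y).2.2‖ ^ (2:ℕ)) ^ ((1:ℝ)/6) ≤
    (‖X.1‖ ^ (6:ℕ) + ‖X.2.1‖ ^ (4:ℕ) + ‖X.2.2‖ ^ (2:ℕ)) ^ ((1:ℝ)/6) +
    (‖Y.1‖ ^ (6:ℕ) + ‖Y.2.1‖ ^ (4:ℕ) + ‖Y.2.2‖ ^ (2:ℕ)) ^ ((1:ℝ)/6) := by
  have h1 : ‖(X + Y).1‖ ≤ ‖X.1‖ + ‖Y.1‖ := norm_add_le _ _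
  have h2 : ‖(X + Y).2.1‖ ≤ ‖X.2.1‖ + ‖Y.2.1‖ := norm_add_le _ _
  have h3 : ‖(X + Y).2.2‖ ≤ ‖X.2.2‖ + ‖Y.2.2‖ := norm_add_le _ _
  have hkey := key (norm_nonneg X.1) (norm_nonneg X.2.1) (norm_nonneg X.2.2)
    (norm_nonneg Y.1) (norm_nonneg Y.2.1) (norm_nonneg Y.2.2)
  calc (‖(X + Y).1‖ ^ (6:ℕ) + ‖(X + Y).2.1‖ ^ (4:ℕ) + ‖(X + Y).2.2‖ ^ (2:ℕ)) ^ ((1:ℝ)/6)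
      ≤ ((‖X.1‖ + ‖Y.1‖) ^ (6:ℕ) + ((‖X.2.1‖ + ‖Y.2.1‖) ^ (4:ℕ) + (‖X.2.2‖ + ‖Y.2.2‖) ^ (2:ℕ))) ^ ((1:ℝ)/6) := by
        apply Real.rpow_le_rpow (by positivity) _ (by norm_num)
        have e1 := pow_le_pow_left₀ (norm_nonneg _) h1 6
        have e2 := pow_le_pow_left₀ (norm_nonneg _) h2 4
        have e3 := pow_le_pow_left₀ (norm_nonneg _) h3 2
        linarith
    _ ≤ (‖X.1‖ ^ (6:ℕ) + (‖X.2.1‖ ^ (4:ℕ) + ‖X.2.2‖ ^ (2:ℕ))) ^ ((1:ℝ)/6) +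
        (‖Y.1‖ ^ (6:ℕ) + (‖Y.2.1‖ ^ (4:ℕ) + ‖Y.2.2‖ ^ (2:ℕ))) ^ ((1:ℝ)/6) := hkey
    _ = (‖X.1‖ ^ (6:ℕ) + ‖X.2.1‖ ^ (4:ℕ) + ‖X.2.2‖ ^ (2:ℕ)) ^ ((1:ℝ)/6) +
        (‖Y.1‖ ^ (6:ℕ) + ‖Y.2.1‖ ^ (4:ℕ) + ‖Y.2.2‖ ^ (2:ℕ)) ^ ((1:ℝ)/6) := by ring_nf
end
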